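/- arXiv:1102.4159 — 7 statements merged into one kernel-verified Lean document; each statement's English description precedes it below -/
import Mathlib

section
/- Let D > 0, let F : ℝ → ℝ be continuously differentiable on [-D, D], let λ ∈ ℝ, and let f : ℝ → ℝ be twice continuously differentiable on [-D, D] with f(-D) = f(D) = 0 and f(x) > 0 for all x ∈ (-D, D), satisfying the equation -f''(x) = F'(x)·f(x) + F(x)·f'(x) + λ·f(x) for all x ∈ (-D, D). Then for every s ∈ (0, 1), one has 4s(1-s)·(π/(2D))² ≤ λ + s·sup_{x ∈ (-D,D)} F'(x). -/
open Set Real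

set_option maxHeartbeats 1000000 in
lemma key_ineq (s a b p pp P Q lam k mu : ℝ) (hs0 : 0 < s) (hs1 : s < 1)
    (ha : a = 1/(4*s*(1-s))) (hb : b = 1/(4*s)) (hp : 0 < p)
    (hQ : Q ≤ mu) (hcon : lam + s * mu < 4 * s * (1 - s) * k ^ 2) :
    0 < (a^2 - a) * pp^2 + (2*a*b - a) * (P*p*pp) + b^2*P^2*p^2
        + ((b - a)*Q - a*lam + k^2) * p^2 := by
  have hs' : (0:ℝ) < 1 - s := by linarith
  have h16 : (0:ℝ) < 16*s^2*(1-s)^2 := by positivity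
  have hid : 16*s^2*(1-s)^2 * ((a^2 - a) * pp^2 + (2*a*b - a) * (P*p*pp) + b^2*P^2*p^2
        + ((b - a)*Q - a*lam + k^2) * p^2)
      = ((1-2*s)*pp + (1-s)*P*p)^2
        + 4*s*(1-s)*((4*s*(1-s)*k^2 - lam - s*mu) + s*(mu - Q))*p^2 := by
    subst ha hb
    field_simp
    ring
  have h1 : 0 < 4*s*(1-s)*((4*s*(1-s)*k^2 - lam - s*mu) + s*(mu - Q))*p^2 := by
    have h2 : 0 < (4*s*(1-s)*k^2 - lam - s*mu) + s*(mu - Q) := by nlinarith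
    have h3 : 0 < 4*s*(1-s) := by nlinarith
    positivity
  have h4 : 0 < 16*s^2*(1-s)^2 * ((a^2 - a) * pp^2 + (2*a*b - a) * (P*p*pp) + b^2*P^2*p^2
        + ((b - a)*Q - a*lam + k^2) * p^2) := by
    rw [hid]
    nlinarith [sq_nonneg ((1-2*s)*pp + (1-s)*P*p)]
  by_contra hT
  push_neg at hT
  nlinarith [mul_nonpos_of_nonneg_of_nonpos h16.le hT]

set_option maxHeartbeats 2000000 in
/-- Analytic core of Corollary 4.3: if `f = v'` solves
`-f'' = F' f + F f' + λ f` on `(-D, D)`, vanishes at `±D` and is positive inside,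
then `4 s (1-s) (π/(2D))² ≤ λ + s · sup_{(-D,D)} F'` for all `s ∈ (0,1)`. -/
theorem stmt_0 (D : ℝ) (hD : 0 < D) (F F' f f' f'' : ℝ → ℝ) (lam : ℝ)
    (hF : ∀ x ∈ Icc (-D) D, HasDerivWithinAt F (F' x) (Icc (-D) D) x)
    (hF'cont : ContinuousOn F' (Icc (-D) D))
    (hf : ∀ x ∈ Icc (-D) D, HasDerivWithinAt f (f' x) (Icc (-D) D) x)
    (hf' : ∀ x ∈ Icc (-D) D, HasDerivWithinAt f' (f'' x) (Icc (-D) D) x)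
    (hf''cont : ContinuousOn f'' (Icc (-D) D))
    (hf0 : f (-D) = 0) (hf1 : f D = 0)
    (hfpos : ∀ x ∈ Ioo (-D) D, 0 < f x)
    (heq : ∀ x ∈ Ioo (-D) D, -f'' x = F' x * f x + F x * f' x + lam * f x) :
    ∀ s ∈ Ioo (0 : ℝ) 1,
      4 * s * (1 - s) * (Real.pi / (2 * D)) ^ 2 ≤
        lam + s * sSup (F' '' Ioo (-D) D) := by
  intro s hs
  obtain ⟨hs0, hs1⟩ := hs
  have hs1' : (0:ℝ) < 1 - s := by linarith
  by_contra hcon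
  push_neg at hcon
  set k := Real.pi / (2 * D) with hk
  set μ := sSup (F' '' Ioo (-D) D) with hmu
  set a := 1/(4*s*(1-s)) with ha
  set b := 1/(4*s) with hb
  have ha0 : 0 < a := by rw [ha]; positivity
  have h4s : 0 < 4*s*(1-s) := by nlinarith
  have ha1 : (1:ℝ) ≤ a := by
    rw [ha, le_div_iff₀ h4s]; nlinarith [sq_nonneg (1-2*s)]
  have hDD : -D < D := by linarith
  have hkpos : 0 < k := by rw [hk]; exact div_pos Real.pi_pos (by linarith)
  have hkD : k * D = π / 2 := by rw [hk]; field_simp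
  have hkD' : k * (-D) = -(π / 2) := by rw [← hkD]; ring
  -- continuity facts
  have hFcont : ContinuousOn F (Icc (-D) D) := fun x hx => (hF x hx).continuousWithinAt
  have hfcont : ContinuousOn f (Icc (-D) D) := fun x hx => (hf x hx).continuousWithinAt
  have hf'c : ContinuousOn f' (Icc (-D) D) := fun x hx => (hf' x hx).continuousWithinAt
  -- sup bound
  have hbdd : BddAbove (F' '' Ioo (-D) D) :=
    BddAbove.mono (image_mono (f := F') Ioo_subset_Icc_self)
      (isCompact_Icc.image_of_continuousOn hF'cont).bddAbove
  have hFle : ∀ x ∈ Ioo (-D) D, F' x ≤ μ := fun x hx => le_csSup hbdd ⟨x, hx, rfl⟩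
  -- continuous extension of F and antiderivative G
  have hgIcc : ∀ x : ℝ, max (-D) (min D x) ∈ Icc (-D) D :=
    fun x => ⟨le_max_left _ _, max_le (by linarith) (min_le_left _ _)⟩
  set Fc : ℝ → ℝ := fun x => F (max (-D) (min D x)) with hFcdef
  have hFccont : Continuous Fc :=
    hFcont.comp_continuous (continuous_const.max (continuous_const.min continuous_id)) hgIcc
  have hFceq : ∀ y ∈ Ioo (-D) D, Fc y = F y := by
    intro y hy
    have h1 : min D y = y := min_eq_right hy.2.le
    have h2 : max (-D) y = y := max_eq_right hy.1.le
    simp only [hFcdef, h1, h2]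
  set G : ℝ → ℝ := fun x => ∫ t in (0:ℝ)..x, Fc t with hGdef
  have hG : ∀ x, HasDerivAt G (Fc x) x :=
    fun x => (hFccont.integral_hasStrictDerivAt 0 x).hasDerivAt
  have hGc : Continuous G := by
    have hdG : Differentiable ℝ G := fun x => (hG x).differentiableAt
    exact hdG.continuous
  set E : ℝ → ℝ := fun x => Real.exp (b * G x) with hEdef
  have hEc : Continuous E := Real.continuous_exp.comp (continuous_const.mul hGc)
  have hEpos : ∀ x, 0 < E x := fun x => Real.exp_pos _
  set w : ℝ → ℝ := fun x => (f x)^a * E x with hwdef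
  set w1 : ℝ → ℝ := fun x => (a * (f x)^(a-1) * f' x + b * Fc x * (f x)^a) * E x with hw1def
  set W : ℝ → ℝ := fun x => w1 x * Real.cos (k*x) - w x * (-(k * Real.sin (k*x))) with hWdef
  -- continuity of W
  have hwc : ContinuousOn w (Icc (-D) D) := by
    rw [hwdef]
    exact (hfcont.rpow_const (fun x _ => Or.inr ha0.le)).mul hEc.continuousOn
  have hw1c : ContinuousOn w1 (Icc (-D) D) := by
    rw [hw1def]
    apply ContinuousOn.mul _ hEc.continuousOn
    apply ContinuousOn.add
    · exact (continuousOn_const.mul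
        (hfcont.rpow_const (fun x _ => Or.inr (by linarith : (0:ℝ) ≤ a - 1)))).mul hf'c
    · exact (continuousOn_const.mul hFccont.continuousOn).mul
        (hfcont.rpow_const (fun x _ => Or.inr ha0.le))
  have hcosC : Continuous (fun x : ℝ => Real.cos (k*x)) := by fun_prop
  have hsinC : Continuous (fun x : ℝ => -(k * Real.sin (k*x))) := by fun_prop
  have hWc : ContinuousOn W (Icc (-D) D) := by
    rw [hWdef]
    exact (hw1c.mul hcosC.continuousOn).sub (hwc.mul hsinC.continuousOn)
  -- derivative of W on the interior
  have hderiv : ∀ x ∈ Ioo (-D) D, HasDerivAt W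
      ((f x)^(a-2) * ((a^2 - a) * (f' x)^2 + (2*a*b - a) * (F x * f x * f' x)
        + b^2*(F x)^2*(f x)^2 + ((b - a)*(F' x) - a*lam + k^2) * (f x)^2)
        * E x * Real.cos (k*x)) x := by
    intro x hx
    have hxI : x ∈ Icc (-D) D := Ioo_subset_Icc_self hx
    have hnb : Icc (-D) D ∈ nhds x := Icc_mem_nhds hx.1 hx.2
    have hfx : HasDerivAt f (f' x) x := (hf x hxI).hasDerivAt hnb
    have hf'x : HasDerivAt f' (f'' x) x := (hf' x hxI).hasDerivAt hnb
    have hFx : HasDerivAt F (F' x) x := (hF x hxI).hasDerivAt hnb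
    have hFcx : HasDerivAt Fc (F' x) x := by
      apply hFx.congr_of_eventuallyEq
      filter_upwards [Ioo_mem_nhds hx.1 hx.2] with y hy
      exact hFceq y hy
    have hp : 0 < f x := hfpos x hx
    have hpne : f x ≠ 0 := ne_of_gt hp
    have hGx : HasDerivAt G (F x) x := by rw [← hFceq x hx]; exact hG x
    have hEx : HasDerivAt E (Real.exp (b * G x) * (b * F x)) x := (hGx.const_mul b).exp
    have hfa : HasDerivAt (fun y => (f y)^a) (f' x * a * (f x)^(a-1)) x :=
      hfx.rpow_const (Or.inl hpne)
    have hfa1 : HasDerivAt (fun y => (f y)^(a-1)) (f' x * (a-1) * (f x)^(a-1-1)) x :=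
      hfx.rpow_const (Or.inl hpne)
    have hkx : HasDerivAt (fun y : ℝ => k * y) k x := by
      simpa using (hasDerivAt_id x).const_mul k
    have hcos : HasDerivAt (fun y => Real.cos (k*y)) (-Real.sin (k*x) * k) x := hkx.cos
    have hmsin : HasDerivAt (fun y => -(k * Real.sin (k*y))) (-(k * (Real.cos (k*x) * k))) x :=
      ((hkx.sin).const_mul k).neg
    have hA : HasDerivAt (fun y => a * (f y)^(a-1) * f' y + b * Fc y * (f y)^a)
        ((a * (f' x * (a-1) * (f x)^(a-1-1)) * f' x + (a * (f x)^(a-1)) * f'' x)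
          + (b * F' x * (f x)^a + (b * Fc x) * (f' x * a * (f x)^(a-1)))) x :=
      (((hfa1.const_mul a).mul hf'x)).add ((hFcx.const_mul b).mul hfa)
    have hw1x : HasDerivAt w1
        (((a * (f' x * (a-1) * (f x)^(a-1-1)) * f' x + (a * (f x)^(a-1)) * f'' x)
          + (b * F' x * (f x)^a + (b * Fc x) * (f' x * a * (f x)^(a-1)))) * E x
         + (a * (f x)^(a-1) * f' x + b * Fc x * (f x)^a) * (Real.exp (b * G x) * (b * F x))) x := by
      rw [hw1def]
      exact hA.mul hEx
    have hwx : HasDerivAt w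
        (f' x * a * (f x)^(a-1) * E x + (f x)^a * (Real.exp (b * G x) * (b * F x))) x := by
      rw [hwdef]
      exact hfa.mul hEx
    have hWx := (hw1x.mul hcos).sub (hwx.mul hmsin)
    rw [hWdef]
    refine hWx.congr_deriv ?_
    have e0 : a - 1 - 1 = a - 2 := by ring
    have e1 : (f x) ^ (a-1) = (f x) ^ (a-2) * f x := by
      rw [show a - 1 = (a-2) + 1 by ring, Real.rpow_add hp, Real.rpow_one]
    have e2 : (f x) ^ a = (f x) ^ (a-2) * (f x * f x) := by
      rw [show a = (a-2) + 1 + 1 by ring, Real.rpow_add hp, Real.rpow_add hp, Real.rpow_one]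
      ring
    have e3 : f'' x = -(F' x * f x + F x * f' x + lam * f x) := by
      have := heq x hx; linarith
    simp only [hw1def, hwdef, hEdef]
    rw [e0, e1, e2, e3, hFceq x hx]
    ring
  -- strict monotonicity of W
  have hmono : StrictMonoOn W (Icc (-D) D) := by
    apply strictMonoOn_of_deriv_pos (convex_Icc _ _) hWc
    intro x hx
    rw [interior_Icc] at hx
    rw [(hderiv x hx).deriv]
    have hp : 0 < f x := hfpos x hx
    have hr : 0 < (f x) ^ (a-2) := Real.rpow_pos_of_pos hp _
    have hcosx : 0 < Real.cos (k*x) := by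
      apply Real.cos_pos_of_mem_Ioo
      constructor
      · have h1 := mul_pos hkpos (sub_pos.mpr hx.1)
        nlinarith [hkD']
      · have h1 := mul_pos hkpos (sub_pos.mpr hx.2)
        nlinarith [hkD]
    have hT := key_ineq s a b (f x) (f' x) (F x) (F' x) lam k μ hs0 hs1 ha hb hp
      (hFle x hx) hcon
    exact mul_pos (mul_pos (mul_pos hr hT) (hEpos x)) hcosx
  -- endpoint values
  have hWD : W D = 0 := by
    simp only [hWdef]
    rw [hkD, Real.cos_pi_div_two]
    have hw0 : w D = 0 := by
      simp only [hwdef]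
      rw [hf1, Real.zero_rpow (ne_of_gt ha0), zero_mul]
    rw [hw0]
    ring
  have hWm : W (-D) = 0 := by
    simp only [hWdef]
    rw [hkD', Real.cos_neg, Real.cos_pi_div_two]
    have hw0 : w (-D) = 0 := by
      simp only [hwdef]
      rw [hf0, Real.zero_rpow (ne_of_gt ha0), zero_mul]
    rw [hw0]
    ring
  have hlt : W (-D) < W D :=
    hmono (left_mem_Icc.mpr hDD.le) (right_mem_Icc.mpr hDD.le) hDD
  rw [hWm, hWD] at hlt
  exact lt_irrefl 0 hlt
end

section
/- Let D > 0 and a > 1, and let f : ℝ → ℝ be twice continuously differentiable on [-D, D] with f(-D) = f(D) = 0 and f(x) > 0 for all x ∈ (-D, D). Then -∫_{-D}^{D} f(x)^{a-1} f''(x) dx = (4(a-1)/a²) ∫_{-D}^{D} ((f^{a/2})'(x))² dx; in particular the (possibly improper) integral on the right-hand side converges. -/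
open Set Real MeasureTheory Filter Topology

/-- Integration-by-parts identity from the proof of Corollary 4.3:
`-∫_{-D}^{D} f^{a-1} f'' = (4(a-1)/a²) ∫_{(-D,D)} ((f^{a/2})')²`,
where the right-hand side is a convergent improper integral over the open
interval `(-D, D)`. -/
theorem stmt_1 (D a : ℝ) (hD : 0 < D) (ha : 1 < a) (f f' f'' : ℝ → ℝ)
    (hf : ∀ x ∈ Icc (-D) D, HasDerivWithinAt f (f' x) (Icc (-D) D) x)
    (hf' : ∀ x ∈ Icc (-D) D, HasDerivWithinAt f' (f'' x) (Icc (-D) D) x)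
    (hf''cont : ContinuousOn f'' (Icc (-D) D))
    (hf0 : f (-D) = 0) (hf1 : f D = 0)
    (hfpos : ∀ x ∈ Ioo (-D) D, 0 < f x) :
    IntegrableOn (fun x => (deriv (fun y => f y ^ (a / 2)) x) ^ 2) (Ioo (-D) D)
      ∧
    -∫ x in (-D)..D, f x ^ (a - 1) * f'' x =
      (4 * (a - 1) / a ^ 2) *
        ∫ x in Ioo (-D) D, (deriv (fun y => f y ^ (a / 2)) x) ^ 2 := by
  have hDD : -D < D := by linarith
  have ha1 : (0:ℝ) < a - 1 := by linarith
  have ha0 : a ≠ 0 := by linarith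
  set Q : ℝ → ℝ := fun x => f x ^ (a - 2) * f' x ^ 2 with hQdef
  set ψ : ℝ → ℝ := fun x => f x ^ (a - 1) * f'' x with hψdef
  set F : ℝ → ℝ := fun x => f x ^ (a - 1) * f' x with hFdef
  set G : ℝ → ℝ := fun x => (deriv (fun y => f y ^ (a / 2)) x) ^ 2 with hGdef
  -- continuity
  have hfc : ContinuousOn f (Icc (-D) D) := fun x hx => (hf x hx).continuousWithinAt
  have hf'c : ContinuousOn f' (Icc (-D) D) := fun x hx => (hf' x hx).continuousWithinAt
  have hra : ContinuousOn (fun x => f x ^ (a - 1)) (Icc (-D) D) :=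
    hfc.rpow_const fun x _ => Or.inr (by linarith)
  have hFc : ContinuousOn F (Icc (-D) D) := hra.mul hf'c
  have hψc : ContinuousOn ψ (Icc (-D) D) := hra.mul hf''cont
  have hF0 : F (-D) = 0 := by
    simp [hFdef, hf0, Real.zero_rpow (by linarith : a - 1 ≠ 0)]
  have hF1 : F D = 0 := by
    simp [hFdef, hf1, Real.zero_rpow (by linarith : a - 1 ≠ 0)]
  -- derivative facts at interior points
  have hderivf : ∀ x ∈ Ioo (-D) D, HasDerivAt f (f' x) x := by
    intro x hx
    exact (hf x (Ioo_subset_Icc_self hx)).hasDerivAt (Icc_mem_nhds hx.1 hx.2)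
  have hderivf' : ∀ x ∈ Ioo (-D) D, HasDerivAt f' (f'' x) x := by
    intro x hx
    exact (hf' x (Ioo_subset_Icc_self hx)).hasDerivAt (Icc_mem_nhds hx.1 hx.2)
  have hderivF : ∀ x ∈ Ioo (-D) D, HasDerivAt F ((a - 1) * Q x + ψ x) x := by
    intro x hx
    have h1 : HasDerivAt (fun y => f y ^ (a - 1)) (f' x * (a - 1) * f x ^ (a - 1 - 1)) x :=
      (hderivf x hx).rpow_const (Or.inl (hfpos x hx).ne')
    have h2 := h1.mul (hderivf' x hx)
    have hx21 : a - 1 - 1 = a - 2 := by ring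
    convert h2 using 1
    · rfl
    · rfl
    · rfl
    rw [hx21]
    simp only [hQdef, hψdef]
    ring
  -- G equals (a^2/4) * Q on the open interval
  have hGQ : ∀ x ∈ Ioo (-D) D, G x = a ^ 2 / 4 * Q x := by
    intro x hx
    have h1 : HasDerivAt (fun y => f y ^ (a / 2)) (f' x * (a / 2) * f x ^ (a / 2 - 1)) x :=
      (hderivf x hx).rpow_const (Or.inl (hfpos x hx).ne')
    have h2 : deriv (fun y => f y ^ (a / 2)) x = f' x * (a / 2) * f x ^ (a / 2 - 1) :=
      h1.deriv
    have h3 : f x ^ (a / 2 - 1) * f x ^ (a / 2 - 1) = f x ^ (a - 2) := by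
      rw [← Real.rpow_add (hfpos x hx)]
      norm_num
      ring_nf
    have h3' : (f x ^ (a / 2 - 1)) ^ 2 = f x ^ (a - 2) := by rw [sq]; exact h3
    simp only [hGdef, h2, hQdef]
    rw [mul_pow, mul_pow, h3']
    ring
  -- continuity of Q on the open interval
  have hQc : ContinuousOn Q (Ioo (-D) D) := by
    apply ContinuousOn.mul
    · exact (hfc.mono Ioo_subset_Icc_self).rpow_const fun x hx => Or.inl (hfpos x hx).ne'
    · exact (hf'c.mono Ioo_subset_Icc_self).pow 2
  have hQnn : ∀ x ∈ Ioo (-D) D, 0 ≤ Q x := fun x hx =>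
    mul_nonneg (Real.rpow_nonneg (hfpos x hx).le _) (sq_nonneg _)
  -- interval integrability of ψ
  have hψint : IntervalIntegrable ψ volume (-D) D :=
    ((hψc.mono (uIcc_of_le hDD.le).subset)).intervalIntegrable
  -- key integration by parts on compact subintervals
  have key : ∀ c d : ℝ, c ∈ Ioo (-D) D → d ∈ Ioo (-D) D → c ≤ d →
      (a - 1) * ∫ x in c..d, Q x = F d - F c - ∫ x in c..d, ψ x := by
    intro c d hc hd hcd
    have hsub : Icc c d ⊆ Ioo (-D) D := Icc_subset_Ioo hc.1 hd.2
    have huIcc : uIcc c d = Icc c d := uIcc_of_le hcd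
    have hcont : ContinuousOn (fun x => (a - 1) * Q x + ψ x) (Icc c d) :=
      ((continuousOn_const.mul (hQc.mono hsub)).add
        (hψc.mono (hsub.trans Ioo_subset_Icc_self)))
    have hint : IntervalIntegrable (fun x => (a - 1) * Q x + ψ x) volume c d :=
      (hcont.mono huIcc.subset).intervalIntegrable
    have hQint : IntervalIntegrable Q volume c d :=
      ((hQc.mono hsub).mono huIcc.subset).intervalIntegrable
    have hψint' : IntervalIntegrable ψ volume c d :=
      ((hψc.mono (hsub.trans Ioo_subset_Icc_self)).mono huIcc.subset).intervalIntegrable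
    have heq := intervalIntegral.integral_eq_sub_of_hasDerivAt
      (f := F) (f' := fun x => (a - 1) * Q x + ψ x)
      (fun x hx => hderivF x (hsub (huIcc ▸ hx))) hint
    rw [intervalIntegral.integral_add (hQint.const_mul _) hψint',
      intervalIntegral.integral_const_mul] at heq
    linarith
  -- a uniform bound
  obtain ⟨M₁, hM₁⟩ := (isCompact_Icc (a := -D) (b := D)).exists_bound_of_continuousOn hFc
  set M : ℝ := (M₁ + M₁ + ∫ x in (-D)..D, |ψ x|) / (a - 1) with hMdef
  have habs_int : IntervalIntegrable (fun x => |ψ x|) volume (-D) D := hψint.abs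
  have hbound : ∀ c d : ℝ, c ∈ Ioo (-D) D → d ∈ Ioo (-D) D → c ≤ d →
      (∫ x in c..d, Q x) ≤ M := by
    intro c d hc hd hcd
    have h1 := key c d hc hd hcd
    have h2 : |∫ x in c..d, ψ x| ≤ ∫ x in (-D)..D, |ψ x| := by
      calc |∫ x in c..d, ψ x| ≤ ∫ x in c..d, |ψ x| :=
            intervalIntegral.abs_integral_le_integral_abs hcd
        _ ≤ ∫ x in (-D)..D, |ψ x| :=
            intervalIntegral.integral_mono_interval hc.1.le hcd hd.2.le
              (ae_of_all _ fun x => abs_nonneg _) habs_int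
    have h3 : |F d| ≤ M₁ := hM₁ d (Ioo_subset_Icc_self hd)
    have h4 : |F c| ≤ M₁ := hM₁ c (Ioo_subset_Icc_self hc)
    have h5 : (a - 1) * ∫ x in c..d, Q x ≤ M₁ + M₁ + ∫ x in (-D)..D, |ψ x| := by
      rw [h1]
      have := abs_le.mp h2
      have := abs_le.mp h3
      have := abs_le.mp h4
      linarith
    rw [hMdef, le_div_iff₀ ha1, mul_comm]
    exact h5
  -- the approximating sequences
  set c : ℕ → ℝ := fun n => -D + D / (n + 2) with hcdef
  set d : ℕ → ℝ := fun n => D - D / (n + 2) with hddef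
  have hpos : ∀ n : ℕ, 0 < D / ((n : ℝ) + 2) := fun n => div_pos hD (by positivity)
  have hhalf : ∀ n : ℕ, D / ((n : ℝ) + 2) ≤ D / 2 := fun n =>
    div_le_div_of_nonneg_left hD.le (by norm_num) (by norm_num [Nat.cast_nonneg])
  have hcmem : ∀ n, c n ∈ Ioo (-D) D := by
    intro n
    constructor
    · simp only [hcdef]; linarith [hpos n]
    · simp only [hcdef]; linarith [hhalf n, hpos n]
  have hdmem : ∀ n, d n ∈ Ioo (-D) D := by
    intro n
    constructor
    · simp only [hddef]; linarith [hhalf n, hpos n]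
    · simp only [hddef]; linarith [hpos n]
  have hcd : ∀ n, c n ≤ d n := by
    intro n
    simp only [hcdef, hddef]
    linarith [hhalf n, hD]
  have htend0 : Tendsto (fun n : ℕ => D / ((n : ℝ) + 2)) atTop (𝓝 0) := by
    apply Tendsto.div_atTop (tendsto_const_nhds (x := D))
    exact tendsto_atTop_add_const_right _ 2 tendsto_natCast_atTop_atTop
  have hctend : Tendsto c atTop (𝓝 (-D)) := by
    have := tendsto_const_nhds (x := -D) (f := atTop (α := ℕ)) |>.add htend0
    simpa using this
  have hdtend : Tendsto d atTop (𝓝 D) := by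
    have := tendsto_const_nhds (x := D) (f := atTop (α := ℕ)) |>.sub htend0
    simpa using this
  -- AECover
  have hcov : AECover (volume.restrict (Ioo (-D) D)) atTop fun n => Ioo (c n) (d n) :=
    aecover_Ioo_of_Ioo hctend hdtend
  -- restricted integrals equal plain integrals
  have hrestrict : ∀ (g : ℝ → ℝ) (n : ℕ),
      (∫ x in Ioo (c n) (d n), g x ∂(volume.restrict (Ioo (-D) D))) = ∫ x in c n..d n, g x := by
    intro g n
    rw [Measure.restrict_restrict measurableSet_Ioo,
      inter_eq_left.mpr (Ioo_subset_Ioo (hcmem n).1.le (hdmem n).2.le),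
      intervalIntegral.integral_of_le (hcd n), integral_Ioc_eq_integral_Ioo]
  have hQinteg : ∀ n : ℕ, IntegrableOn Q (Ioo (c n) (d n)) (volume.restrict (Ioo (-D) D)) := by
    intro n
    rw [IntegrableOn, Measure.restrict_restrict measurableSet_Ioo,
      inter_eq_left.mpr (Ioo_subset_Ioo (hcmem n).1.le (hdmem n).2.le)]
    exact ((hQc.mono (Icc_subset_Ioo (hcmem n).1 (hdmem n).2)).integrableOn_compact
      isCompact_Icc).mono_set Ioo_subset_Icc_self
  have hQnn_ae : ∀ᵐ x ∂(volume.restrict (Ioo (-D) D)), 0 ≤ Q x :=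
    ae_restrict_of_forall_mem measurableSet_Ioo hQnn
  have hbdd : ∀ᶠ n in atTop,
      (∫ x in Ioo (c n) (d n), Q x ∂(volume.restrict (Ioo (-D) D))) ≤ M := by
    filter_upwards with n
    rw [hrestrict Q n]
    exact hbound _ _ (hcmem n) (hdmem n) (hcd n)
  -- integrability of Q
  have hQInt : IntegrableOn Q (Ioo (-D) D) :=
    hcov.integrable_of_integral_bounded_of_nonneg_ae M hQinteg hQnn_ae hbdd
  -- the limit identity
  have hTQ : Tendsto (fun n => ∫ x in c n..d n, Q x) atTop (𝓝 (∫ x in Ioo (-D) D, Q x)) := by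
    have := hcov.integral_tendsto_of_countably_generated (f := Q) hQInt
    simpa only [hrestrict Q] using this
  -- boundary terms
  have hFd : Tendsto (fun n => F (d n)) atTop (𝓝 0) := by
    rw [← hF1]
    apply ((hFc D (right_mem_Icc.mpr hDD.le)).tendsto).comp
    rw [tendsto_nhdsWithin_iff]
    exact ⟨hdtend, Eventually.of_forall fun n => Ioo_subset_Icc_self (hdmem n)⟩
  have hFcn : Tendsto (fun n => F (c n)) atTop (𝓝 0) := by
    rw [← hF0]
    apply ((hFc (-D) (left_mem_Icc.mpr hDD.le)).tendsto).comp
    rw [tendsto_nhdsWithin_iff]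
    exact ⟨hctend, Eventually.of_forall fun n => Ioo_subset_Icc_self (hcmem n)⟩
  -- ψ integrals converge
  have hψInt : IntegrableOn ψ (Ioo (-D) D) :=
    ((hψc.integrableOn_compact isCompact_Icc).mono_set Ioo_subset_Icc_self)
  have hψinteg : ∀ n : ℕ, IntegrableOn ψ (Ioo (c n) (d n)) (volume.restrict (Ioo (-D) D)) := by
    intro n
    rw [IntegrableOn, Measure.restrict_restrict measurableSet_Ioo,
      inter_eq_left.mpr (Ioo_subset_Ioo (hcmem n).1.le (hdmem n).2.le)]
    exact hψInt.mono_set (Ioo_subset_Ioo (hcmem n).1.le (hdmem n).2.le)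
  have hTψ : Tendsto (fun n => ∫ x in c n..d n, ψ x) atTop (𝓝 (∫ x in Ioo (-D) D, ψ x)) := by
    have := hcov.integral_tendsto_of_countably_generated (f := ψ) hψInt
    simpa only [hrestrict ψ] using this
  have hψIoo : ∫ x in Ioo (-D) D, ψ x = ∫ x in (-D)..D, ψ x := by
    rw [intervalIntegral.integral_of_le hDD.le, integral_Ioc_eq_integral_Ioo]
  -- combine limits
  have hlim2 : Tendsto (fun n => (a - 1) * ∫ x in c n..d n, Q x) atTop
      (𝓝 (0 - 0 - ∫ x in (-D)..D, ψ x)) := by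
    have : (fun n => (a - 1) * ∫ x in c n..d n, Q x)
        = fun n => F (d n) - F (c n) - ∫ x in c n..d n, ψ x := by
      funext n
      exact key _ _ (hcmem n) (hdmem n) (hcd n)
    rw [this]
    exact (hFd.sub hFcn).sub (hψIoo ▸ hTψ)
  have hlim1 : Tendsto (fun n => (a - 1) * ∫ x in c n..d n, Q x) atTop
      (𝓝 ((a - 1) * ∫ x in Ioo (-D) D, Q x)) := hTQ.const_mul _
  have hmain : (a - 1) * ∫ x in Ioo (-D) D, Q x = -∫ x in (-D)..D, ψ x := by
    have := tendsto_nhds_unique hlim1 hlim2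
    linarith [this]
  -- transfer from Q to G
  have hGInt : IntegrableOn G (Ioo (-D) D) := by
    have h1 : IntegrableOn (fun x => a ^ 2 / 4 * Q x) (Ioo (-D) D) := hQInt.const_mul _
    exact h1.congr_fun (fun x hx => (hGQ x hx).symm) measurableSet_Ioo
  have hGint_eq : ∫ x in Ioo (-D) D, G x = a ^ 2 / 4 * ∫ x in Ioo (-D) D, Q x := by
    rw [← integral_const_mul]
    exact setIntegral_congr_fun measurableSet_Ioo hGQ
  refine ⟨hGInt, ?_⟩
  rw [hGint_eq, ← hmain]
  field_simp
end

section
/- Let D > 0 and a > 1, let F : ℝ → ℝ be continuously differentiable on [-D, D], let λ ∈ ℝ, and let f : ℝ → ℝ be twice continuously differentiable on [-D, D] with f(-D) = f(D) = 0 and f(x) > 0 for all x ∈ (-D, D), satisfying the equation -f''(x) = F'(x)·f(x) + F(x)·f'(x) + λ·f(x) for all x ∈ (-D, D). Set s = 1 - 1/a ∈ (0, 1). Then 4s(1-s) ∫_{-D}^{D} ((f^{a/2})'(x))² dx = ∫_{-D}^{D} (λ + s·F'(x)) f(x)^{a} dx. -/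
open Set Real MeasureTheory

/-- Key intermediate identity in the proof of Corollary 4.3: with `s = 1 - 1/a`,
`4 s (1-s) ∫_{(-D,D)} ((f^{a/2})')² = ∫_{-D}^{D} (λ + s F') f^a`. -/
theorem stmt_3 (D a : ℝ) (hD : 0 < D) (ha : 1 < a) (F F' f f' f'' : ℝ → ℝ)
    (lam : ℝ)
    (hF : ∀ x ∈ Icc (-D) D, HasDerivWithinAt F (F' x) (Icc (-D) D) x)
    (hF'cont : ContinuousOn F' (Icc (-D) D))
    (hf : ∀ x ∈ Icc (-D) D, HasDerivWithinAt f (f' x) (Icc (-D) D) x)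
    (hf' : ∀ x ∈ Icc (-D) D, HasDerivWithinAt f' (f'' x) (Icc (-D) D) x)
    (hf''cont : ContinuousOn f'' (Icc (-D) D))
    (hf0 : f (-D) = 0) (hf1 : f D = 0)
    (hfpos : ∀ x ∈ Ioo (-D) D, 0 < f x)
    (heq : ∀ x ∈ Ioo (-D) D, -f'' x = F' x * f x + F x * f' x + lam * f x) :
    4 * (1 - 1 / a) * (1 - (1 - 1 / a)) *
        (∫ x in Ioo (-D) D, (deriv (fun y => f y ^ (a / 2)) x) ^ 2) =
      ∫ x in (-D)..D, (lam + (1 - 1 / a) * F' x) * f x ^ a := by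
  have ha0 : (0:ℝ) < a := by linarith
  have haD : -D ≤ D := by linarith
  have hDD : -D < D := by linarith
  -- basic continuity
  have hfc : ContinuousOn f (Icc (-D) D) := fun x hx => (hf x hx).continuousWithinAt
  have hf'c : ContinuousOn f' (Icc (-D) D) := fun x hx => (hf' x hx).continuousWithinAt
  have hFc : ContinuousOn F (Icc (-D) D) := fun x hx => (hF x hx).continuousWithinAt
  have hfnn : ∀ x ∈ Icc (-D) D, 0 ≤ f x := by
    intro x hx
    rcases eq_or_lt_of_le hx.1 with h1 | h1
    · rw [← h1, hf0]
    rcases eq_or_lt_of_le hx.2 with h2 | h2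
    · rw [h2, hf1]
    exact (hfpos x ⟨h1, h2⟩).le
  have hrpowc : ∀ p : ℝ, 0 ≤ p → ContinuousOn (fun x => f x ^ p) (Icc (-D) D) := by
    intro p hp
    exact hfc.rpow_const (fun x _ => Or.inr hp)
  -- integrability helpers
  have intIoo : ∀ {u : ℝ → ℝ}, ContinuousOn u (Icc (-D) D) → IntegrableOn u (Ioo (-D) D) := by
    intro u h
    exact h.integrableOn_Icc.mono_set Ioo_subset_Icc_self
  have intII : ∀ {u : ℝ → ℝ}, ContinuousOn u (Icc (-D) D) →
      IntervalIntegrable u volume (-D) D := by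
    intro u h
    have h2 : IntegrableOn u (uIcc (-D) D) := by
      rw [uIcc_of_le haD]; exact h.integrableOn_Icc
    exact h2.intervalIntegrable
  -- interior derivatives
  have hfd : ∀ x ∈ Ioo (-D) D, HasDerivAt f (f' x) x := by
    intro x hx
    exact (hf x (Ioo_subset_Icc_self hx)).hasDerivAt (Icc_mem_nhds hx.1 hx.2)
  have hf'd : ∀ x ∈ Ioo (-D) D, HasDerivAt f' (f'' x) x := by
    intro x hx
    exact (hf' x (Ioo_subset_Icc_self hx)).hasDerivAt (Icc_mem_nhds hx.1 hx.2)
  have hFd : ∀ x ∈ Ioo (-D) D, HasDerivAt F (F' x) x := by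
    intro x hx
    exact (hF x (Ioo_subset_Icc_self hx)).hasDerivAt (Icc_mem_nhds hx.1 hx.2)
  have hfpowd : ∀ p : ℝ, ∀ x ∈ Ioo (-D) D,
      HasDerivAt (fun y => f y ^ p) (f' x * p * f x ^ (p - 1)) x := by
    intro p x hx
    exact (hfd x hx).rpow_const (Or.inl (hfpos x hx).ne')
  -- key functions
  set φ : ℝ → ℝ := fun x => f'' x * f x ^ (a - 1) with hφ
  set ψ : ℝ → ℝ := fun x => (a - 1) * (f' x ^ 2 * f x ^ (a - 2)) with hψ
  set g : ℝ → ℝ := fun x => f' x * f x ^ (a - 1) with hg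
  have hφcont : ContinuousOn φ (Icc (-D) D) :=
    hf''cont.mul (hrpowc (a - 1) (by linarith))
  have hgcont : ContinuousOn g (Icc (-D) D) :=
    hf'c.mul (hrpowc (a - 1) (by linarith))
  have hgderiv : ∀ x ∈ Ioo (-D) D, HasDerivAt g (φ x + ψ x) x := by
    intro x hx
    have h1 : HasDerivAt (fun y => f' y * f y ^ (a - 1)) _ x := (hf'd x hx).mul (hfpowd (a - 1) x hx)
    convert h1 using 1
    simp only [hφ, hψ]
    have : a - 1 - 1 = a - 2 := by ring
    rw [this]; ring
  have hψnn : ∀ x ∈ Ioo (-D) D, 0 ≤ ψ x := by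
    intro x hx
    exact mul_nonneg (by linarith)
      (mul_nonneg (sq_nonneg _) (Real.rpow_nonneg (hfpos x hx).le _))
  -- primitive of φ
  have hφintII : IntervalIntegrable φ volume (-D) D := intII hφcont
  set Φ : ℝ → ℝ := fun x => ∫ t in (-D)..x, φ t with hΦ
  have hΦcont : ContinuousOn Φ (Icc (-D) D) := by
    have := intervalIntegral.continuousOn_primitive_interval'
      (μ := volume) (f := φ) (b₁ := -D) (b₂ := D) hφintII
      (by rw [uIcc_of_le haD]; exact left_mem_Icc.mpr haD)
    rwa [uIcc_of_le haD] at this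
  have hΦderiv : ∀ x ∈ Ioo (-D) D, HasDerivAt Φ (φ x) x := by
    intro x hx
    have hint : IntervalIntegrable φ volume (-D) x := by
      apply (hφcont.integrableOn_Icc.mono_set _).intervalIntegrable
      rw [uIcc_of_le hx.1.le]
      exact Icc_subset_Icc le_rfl hx.2.le
    have hca : ContinuousAt φ x :=
      (hφcont x (Ioo_subset_Icc_self hx)).continuousAt (Icc_mem_nhds hx.1 hx.2)
    have hmeas : StronglyMeasurableAtFilter φ (nhds x) volume :=
      ContinuousOn.stronglyMeasurableAtFilter isOpen_Ioo
        (hφcont.mono Ioo_subset_Icc_self) x hx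
    exact intervalIntegral.integral_hasDerivAt_right hint hmeas hca
  -- ψ is integrable (nonneg derivative of g - Φ)
  have hψint : IntegrableOn ψ (Ioc (-D) D) := by
    apply intervalIntegral.integrableOn_deriv_of_nonneg (g := fun x => g x - Φ x)
      (hgcont.sub hΦcont) _ hψnn
    intro x hx
    have : HasDerivAt (fun x => g x - Φ x) _ x := (hgderiv x hx).sub (hΦderiv x hx)
    simpa using this
  have hψintII : IntervalIntegrable ψ volume (-D) D :=
    (intervalIntegrable_iff_integrableOn_Ioc_of_le haD).mpr hψint
  -- FTC for g
  have hgval : (∫ x in (-D)..D, (φ x + ψ x)) = 0 := by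
    rw [intervalIntegral.integral_eq_sub_of_hasDerivAt_of_le haD hgcont hgderiv
      (hφintII.add hψintII)]
    simp only [hg, hf0, hf1]
    rw [Real.zero_rpow (sub_ne_zero_of_ne (ne_of_gt ha))]
    ring
  have key1 : (∫ x in (-D)..D, ψ x) = -∫ x in (-D)..D, φ x := by
    rw [intervalIntegral.integral_add hφintII hψintII] at hgval
    linarith
  -- FTC for F * f^a (integration by parts)
  have hhcont : ContinuousOn (fun x => F x * f x ^ a) (Icc (-D) D) :=
    hFc.mul (hrpowc a ha0.le)
  have hh'cont : ContinuousOn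
      (fun x => F' x * f x ^ a + a * (F x * (f' x * f x ^ (a - 1)))) (Icc (-D) D) := by
    apply (hF'cont.mul (hrpowc a ha0.le)).add
    exact (continuousOn_const.mul (hFc.mul (hf'c.mul (hrpowc (a-1) (by linarith)))))
  have key2 : (∫ x in (-D)..D,
      (F' x * f x ^ a + a * (F x * (f' x * f x ^ (a - 1))))) = 0 := by
    rw [intervalIntegral.integral_eq_sub_of_hasDerivAt_of_le haD hhcont _ (intII hh'cont)]
    · rw [hf0, hf1, Real.zero_rpow ha0.ne']; ring
    · intro x hx
      have h1 : HasDerivAt (fun y => F y * f y ^ a) _ x := (hFd x hx).mul (hfpowd a x hx)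
      exact h1.congr_deriv (by ring)
  -- name the Ioo integrals
  set A : ℝ := ∫ x in Ioo (-D) D, f' x ^ 2 * f x ^ (a - 2) with hA
  set B : ℝ := ∫ x in Ioo (-D) D, F' x * f x ^ a with hB
  set C : ℝ := ∫ x in Ioo (-D) D, F x * (f' x * f x ^ (a - 1)) with hC
  set E : ℝ := ∫ x in Ioo (-D) D, f x ^ a with hE
  have iB : IntegrableOn (fun x => F' x * f x ^ a) (Ioo (-D) D) :=
    intIoo (hF'cont.mul (hrpowc a ha0.le))
  have iC : IntegrableOn (fun x => F x * (f' x * f x ^ (a - 1))) (Ioo (-D) D) :=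
    intIoo (hFc.mul (hf'c.mul (hrpowc (a-1) (by linarith))))
  have iE : IntegrableOn (fun x => f x ^ a) (Ioo (-D) D) :=
    intIoo (hrpowc a ha0.le)
  -- convert interval integrals to Ioo integrals
  have toIoo : ∀ u : ℝ → ℝ, (∫ x in (-D)..D, u x) = ∫ x in Ioo (-D) D, u x := by
    intro u
    rw [intervalIntegral.integral_of_le haD, MeasureTheory.integral_Ioc_eq_integral_Ioo]
  -- express ∫φ over Ioo using the ODE
  have hφeq : ∀ x ∈ Ioo (-D) D, φ x =
      -(F' x * f x ^ a + F x * (f' x * f x ^ (a - 1)) + lam * f x ^ a) := by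
    intro x hx
    have h := heq x hx
    have hfa : f x * f x ^ (a - 1) = f x ^ a := by
      have h2 := Real.rpow_add (hfpos x hx) 1 (a - 1)
      rw [Real.rpow_one] at h2
      rw [← h2]
      congr 1
      ring
    simp only [hφ]
    have : f'' x = -(F' x * f x + F x * f' x + lam * f x) := by linarith
    rw [this]
    rw [← hfa]; ring
  have hφIoo : (∫ x in Ioo (-D) D, φ x) = -(B + C + lam * E) := by
    rw [MeasureTheory.setIntegral_congr_fun measurableSet_Ioo hφeq]
    rw [MeasureTheory.integral_neg]
    congr 1
    have e1 := MeasureTheory.integral_add (μ := volume.restrict (Ioo (-D) D))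
      (iB.add iC) (iE.const_mul lam)
    have e2 := MeasureTheory.integral_add (μ := volume.restrict (Ioo (-D) D)) iB iC
    simp only [Pi.add_apply] at e1 e2
    rw [e1, e2, MeasureTheory.integral_const_mul]
  -- key1 in terms of A, B, C, E
  have hψIoo : (∫ x in Ioo (-D) D, ψ x) = (a - 1) * A := by
    simp only [hψ]
    rw [MeasureTheory.integral_const_mul]
  have eq1 : (a - 1) * A = B + C + lam * E := by
    have := key1
    rw [toIoo ψ, toIoo φ, hψIoo, hφIoo] at this
    linarith
  -- key2 in terms of B, C
  have eq2 : B + a * C = 0 := by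
    have := key2
    rw [toIoo _] at this
    have e := MeasureTheory.integral_add (μ := volume.restrict (Ioo (-D) D)) iB (iC.const_mul a)
    rw [e, MeasureTheory.integral_const_mul] at this
    exact this
  -- the LHS integral
  have hderiv2 : ∀ x ∈ Ioo (-D) D,
      (deriv (fun y => f y ^ (a / 2)) x) ^ 2 = (a / 2) ^ 2 * (f' x ^ 2 * f x ^ (a - 2)) := by
    intro x hx
    have hd := hfpowd (a / 2) x hx
    rw [hd.deriv]
    have hsq : (f x ^ (a / 2 - 1)) ^ 2 = f x ^ (a - 2) := by
      rw [← Real.rpow_natCast (f x ^ (a / 2 - 1)) 2, ← Real.rpow_mul (hfpos x hx).le]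
      congr 1
      push_cast
      ring
    calc (f' x * (a / 2) * f x ^ (a / 2 - 1)) ^ 2
        = (a / 2) ^ 2 * (f' x ^ 2 * (f x ^ (a / 2 - 1)) ^ 2) := by ring
      _ = (a / 2) ^ 2 * (f' x ^ 2 * f x ^ (a - 2)) := by rw [hsq]
  have hLHS : (∫ x in Ioo (-D) D, (deriv (fun y => f y ^ (a / 2)) x) ^ 2)
      = (a / 2) ^ 2 * A := by
    rw [MeasureTheory.setIntegral_congr_fun measurableSet_Ioo hderiv2]
    rw [MeasureTheory.integral_const_mul]
  -- the RHS integral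
  have hRHS : (∫ x in (-D)..D, (lam + (1 - 1 / a) * F' x) * f x ^ a)
      = lam * E + (1 - 1 / a) * B := by
    rw [toIoo]
    have : ∀ x ∈ Ioo (-D) D, (lam + (1 - 1 / a) * F' x) * f x ^ a
        = lam * f x ^ a + (1 - 1 / a) * (F' x * f x ^ a) := by
      intro x _; ring
    rw [MeasureTheory.setIntegral_congr_fun measurableSet_Ioo this]
    have e := MeasureTheory.integral_add (μ := volume.restrict (Ioo (-D) D))
      (iE.const_mul lam) (iB.const_mul (1 - 1/a))
    rw [e, MeasureTheory.integral_const_mul, MeasureTheory.integral_const_mul]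
  -- finish
  rw [hLHS, hRHS]
  have hC' : C = -(B / a) := by
    field_simp at eq2 ⊢
    linarith
  have : (a - 1) * A = B + -(B / a) + lam * E := by rw [← hC']; exact eq1
  have hane : a ≠ 0 := ha0.ne'
  field_simp at this ⊢
  nlinarith [this]
end

section
/- Let n ≥ 2 be an integer, K ∈ ℝ, λ ∈ ℝ, and d > 0, with the additional assumption d < π/√K when K > 0. Define T_K : ℝ → ℝ by T_K(x) = √K·tan(√K·x) if K > 0, T_K(x) = 0 if K = 0, and T_K(x) = -√(-K)·tanh(√(-K)·x) if K < 0. Suppose v : ℝ → ℝ is three times continuously differentiable on [-d/2, d/2], satisfies the Neumann conditions v'(-d/2) = v'(d/2) = 0, has v'(x) > 0 for all x ∈ (-d/2, d/2), and solves v''(x) - (n-1)·T_K(x)·v'(x) = -λ·v(x) for all x ∈ (-d/2, d/2). Then for every s ∈ (0, 1), λ ≥ 4s(1-s)·π²/d² + s·(n-1)·K. -/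
open Set Real

/-- The coefficient function `T_K` of the one-dimensional model operator
`L v = v'' - (n-1) T_K v'`. -/
noncomputable def modelT (K x : ℝ) : ℝ :=
  if 0 < K then Real.sqrt K * Real.tan (Real.sqrt K * x)
  else if K = 0 then 0
  else -Real.sqrt (-K) * Real.tanh (Real.sqrt (-K) * x)


private lemma bchoice (mr s : ℝ) (hm1 : 1 ≤ mr) (hs0 : 0 < s) (hs1 : s < 1) :
    ∃ b : ℝ, 0 < b ∧ b ≤ 1 ∧ 4*s*(1-s) ≤ b ∧
      ∀ p q : ℝ, (s*mr)*((s*mr) - (mr+1))*p^2 + b*(2*(s*mr) - mr)*p*q + b*(b-1)*q^2 ≤ 0 := by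
  set a : ℝ := s * mr with ha
  set D : ℝ := 4 * s * (mr + 1 - a) with hD
  set E : ℝ := mr * (2*s - 1)^2 with hE
  have hma : 0 < mr + 1 - a := by nlinarith
  have hDpos : 0 < D := by positivity
  have hEnn : 0 ≤ E := by positivity
  have hDE : 0 < D + E := by linarith
  refine ⟨D / (D + E), by positivity, by rw [div_le_one hDE]; linarith, ?_, ?_⟩
  · rw [le_div_iff₀ hDE, hD, hE]
    nlinarith [mul_nonneg hs0.le (sq_nonneg (2*s-1))]
  · set b : ℝ := D / (D + E) with hb
    have hbE : b * E = D * (1 - b) := by rw [hb]; field_simp; ring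
    have hbsq : (b * (2*a - mr))^2 = 4 * (a * (mr + 1 - a)) * (b * (1 - b)) := by
      have h1 : (b * (2*a - mr))^2 = b * (b * E) * mr := by rw [hE]; ring
      rw [h1, hbE, hD, ha]; ring
    have halpos : 0 < a * (mr + 1 - a) := by positivity
    intro p q
    have key : 4*(a * (mr + 1 - a))*((a * (mr + 1 - a))*p^2 - (b * (2*a - mr))*p*q + (b * (1 - b))*q^2)
        = (2*(a * (mr + 1 - a))*p - (b * (2*a - mr))*q)^2
          + (4*(a * (mr + 1 - a))*(b * (1 - b)) - (b * (2*a - mr))^2)*q^2 := by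
      ring
    have h3 : 0 ≤ (a * (mr + 1 - a))*p^2 - (b * (2*a - mr))*p*q + (b * (1 - b))*q^2 := by
      nlinarith [key, hbsq, sq_nonneg (2*(a * (mr + 1 - a))*p - (b * (2*a - mr))*q), halpos]
    nlinarith [h3]

private lemma endpoint_deriv_nonpos {f : ℝ → ℝ} {A B f' : ℝ} (hAB : A < B)
    (hf : HasDerivWithinAt f f' (Icc A B) B) (h0 : f B = 0)
    (hnn : ∀ x ∈ Icc A B, 0 ≤ f x) : f' ≤ 0 := by
  rw [hasDerivWithinAt_iff_tendsto_slope] at hf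
  haveI : (nhdsWithin B (Icc A B \ {B})).NeBot := by
    rw [Icc_sdiff_right]
    exact mem_closure_iff_nhdsWithin_neBot.mp
      (by rw [closure_Ico hAB.ne]; exact right_mem_Icc.mpr hAB.le)
  refine le_of_tendsto hf ?_
  filter_upwards [self_mem_nhdsWithin] with y hy
  have hyI : y ∈ Icc A B := hy.1
  have hyB : y ≠ B := by simpa using hy.2
  have hylt : y < B := lt_of_le_of_ne hyI.2 hyB
  rw [slope_def_field, h0]
  apply div_nonpos_of_nonneg_of_nonpos
  · simpa using hnn y hyI
  · linarith

private lemma endpoint_deriv_nonneg {f : ℝ → ℝ} {A B f' : ℝ} (hAB : A < B)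
    (hf : HasDerivWithinAt f f' (Icc A B) A) (h0 : f A = 0)
    (hnn : ∀ x ∈ Icc A B, 0 ≤ f x) : 0 ≤ f' := by
  rw [hasDerivWithinAt_iff_tendsto_slope] at hf
  haveI : (nhdsWithin A (Icc A B \ {A})).NeBot := by
    rw [Icc_sdiff_left]
    exact mem_closure_iff_nhdsWithin_neBot.mp
      (by rw [closure_Ioc hAB.ne]; exact left_mem_Icc.mpr hAB.le)
  refine ge_of_tendsto hf ?_
  filter_upwards [self_mem_nhdsWithin] with y hy
  have hyI : y ∈ Icc A B := hy.1
  have hyA : y ≠ A := by simpa using hy.2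
  have hygt : A < y := lt_of_le_of_ne hyI.1 (Ne.symm hyA)
  rw [slope_def_field, h0]
  apply div_nonneg
  · simpa using hnn y hyI
  · linarith

set_option maxHeartbeats 1000000 in
private theorem model_key (m : ℕ) (hm : 1 ≤ m) (K lam d : ℝ) (hd : 0 < d)
    (c T : ℝ → ℝ)
    (hc : ∀ x ∈ Icc (-(d / 2)) (d / 2), 0 < c x)
    (hcd : ∀ x ∈ Icc (-(d / 2)) (d / 2),
      HasDerivWithinAt c (-(T x * c x)) (Icc (-(d / 2)) (d / 2)) x)
    (hTd : ∀ x ∈ Icc (-(d / 2)) (d / 2),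
      HasDerivWithinAt T (K + T x ^ 2) (Icc (-(d / 2)) (d / 2)) x)
    (v v' v'' v''' : ℝ → ℝ)
    (hv : ∀ x ∈ Icc (-(d / 2)) (d / 2),
      HasDerivWithinAt v (v' x) (Icc (-(d / 2)) (d / 2)) x)
    (hv' : ∀ x ∈ Icc (-(d / 2)) (d / 2),
      HasDerivWithinAt v' (v'' x) (Icc (-(d / 2)) (d / 2)) x)
    (hv'' : ∀ x ∈ Icc (-(d / 2)) (d / 2),
      HasDerivWithinAt v'' (v''' x) (Icc (-(d / 2)) (d / 2)) x)
    (hNeu0 : v' (-(d / 2)) = 0) (hNeu1 : v' (d / 2) = 0)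
    (hmono : ∀ x ∈ Ioo (-(d / 2)) (d / 2), 0 < v' x)
    (heq : ∀ x ∈ Ioo (-(d / 2)) (d / 2),
      v'' x - (m : ℝ) * T x * v' x = -lam * v x)
    (s : ℝ) (hs0 : 0 < s) (hs1 : s < 1)
    (hlt : lam < 4 * s * (1 - s) * Real.pi ^ 2 / d ^ 2 + s * (m : ℝ) * K) : False := by
  have hd2 : -(d / 2) < d / 2 := by linarith
  have hm1 : (1:ℝ) ≤ (m:ℝ) := Nat.one_le_cast.mpr hm
  obtain ⟨b, hb0, hb1, hb4, hquad⟩ := bchoice (m:ℝ) s hm1 hs0 hs1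
  set mr : ℝ := (m:ℝ) with hmr
  set a : ℝ := s * mr with ha
  set I : Set ℝ := Icc (-(d / 2)) (d / 2) with hIdef
  -- choice of k'
  have h4s : 0 < 4 * s * (1 - s) := by nlinarith
  set kk : ℝ := π / d with hkk
  have hkkpos : 0 < kk := by rw [hkk]; positivity
  have hkk2 : kk ^ 2 = π ^ 2 / d ^ 2 := by rw [hkk, div_pow]
  have hlt2 : lam - a * K < 4 * s * (1 - s) * kk ^ 2 := by
    have h3 : 4 * s * (1 - s) * kk ^ 2 = 4 * s * (1 - s) * π ^ 2 / d ^ 2 := by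
      rw [hkk2]; ring
    rw [h3]; linarith [hlt]
  set θ : ℝ := (lam - a*K) / (4*s*(1-s)) with hθ
  have hθlt : θ < kk^2 := by
    rw [hθ, div_lt_iff₀ h4s]; nlinarith [hlt2]
  set M : ℝ := max θ 0 with hM
  have hMlt : M < kk^2 := max_lt hθlt (by positivity)
  have hM0 : 0 ≤ M := le_max_right θ 0
  set ksq : ℝ := (M + kk^2)/2 with hksq
  have hksq0 : 0 < ksq := by rw [hksq]; positivity
  have hksqlt : ksq < kk^2 := by rw [hksq]; linarith
  have hMksq : M < ksq := by rw [hksq]; linarith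
  set k' : ℝ := Real.sqrt ksq with hk'
  have hk'sq : k'^2 = ksq := Real.sq_sqrt hksq0.le
  have hk'pos : 0 < k' := Real.sqrt_pos.mpr hksq0
  have hk'lt : k' < kk := by
    rw [hk', show kk = Real.sqrt (kk^2) from (Real.sqrt_sq hkkpos.le).symm]
    exact Real.sqrt_lt_sqrt hksq0.le hksqlt
  have hlamk : lam < 4*s*(1-s)*k'^2 + a*K := by
    have hθM : θ ≤ M := le_max_left θ 0
    have he1 : 4*s*(1-s)*θ = lam - a*K := by rw [hθ]; field_simp [sub_ne_zero.mpr hs1.ne']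
    rw [hk'sq]
    nlinarith [mul_le_mul_of_nonneg_left hθM (le_of_lt h4s), mul_lt_mul_of_pos_left hMksq h4s, he1]
  -- positivity of cos (k' x) on I
  have hkd : k' * (d/2) < π/2 := by
    have h1 : k' * (d/2) < kk * (d/2) := by
      apply mul_lt_mul_of_pos_right hk'lt; positivity
    have h2 : kk * (d/2) = π/2 := by rw [hkk]; field_simp
    linarith
  have hCpos : ∀ x ∈ I, 0 < Real.cos (k' * x) := by
    intro x hx
    rw [hIdef, mem_Icc] at hx
    apply Real.cos_pos_of_mem_Ioo
    constructor
    · nlinarith [hx.1]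
    · nlinarith [hx.2]
  have hCne : ∀ x ∈ I, Real.cos (k' * x) ≠ 0 := fun x hx => (hCpos x hx).ne'
  -- basic derivative facts
  have hmul : ∀ x : ℝ, HasDerivAt (fun y : ℝ => k' * y) k' x := by
    intro x
    simpa using (hasDerivAt_id x).const_mul k'
  have hCder : ∀ x : ℝ, HasDerivAt (fun y => Real.cos (k' * y)) (-Real.sin (k' * x) * k') x := by
    intro x
    exact (Real.hasDerivAt_cos (k' * x)).comp x (hmul x)
  have hTanDer : ∀ x ∈ I, HasDerivAt (fun y => Real.tan (k' * y))
      (k' * (1 + Real.tan (k' * x)^2)) x := by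
    intro x hx
    have h1 := (Real.hasDerivAt_tan (hCne x hx)).comp x (hmul x)
    convert h1 using 1
    · rfl
    · rfl
    · rfl
    have h2 : 1 / Real.cos (k'*x)^2 = 1 + Real.tan (k'*x)^2 := by
      rw [← Real.inv_one_add_tan_sq (hCne x hx), one_div, inv_inv]
    rw [h2]; ring
  have hlogc : ∀ x ∈ I, HasDerivWithinAt (fun y => Real.log (c y)) (-(T x)) I x := by
    intro x hx
    have h := (hcd x hx).log (hc x hx).ne'
    convert h using 1
    rw [eq_div_iff (hc x hx).ne']; ring
  have hlogC : ∀ x ∈ I, HasDerivWithinAt (fun y => Real.log (Real.cos (k' * y)))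
      (-(k' * Real.tan (k' * x))) I x := by
    intro x hx
    have h := ((hCder x).hasDerivWithinAt (s := I)).log (hCne x hx)
    convert h using 1
    rw [Real.tan_eq_sin_div_cos]
    ring
  -- the main functions
  set u : ℝ → ℝ := fun y => Real.exp (a * Real.log (c y) + b * Real.log (Real.cos (k' * y))) with hu
  set F : ℝ → ℝ := fun y => -(a * T y) - b * (k' * Real.tan (k' * y)) with hF
  set FD : ℝ → ℝ := fun y => -(a * (K + T y^2)) - b * (k' * (k' * (1 + Real.tan (k' * y)^2))) with hFD
  set e : ℝ → ℝ := fun y => Real.exp (mr * Real.log (c y)) with he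
  set r : ℝ → ℝ := fun y => Real.exp (-mr * Real.log (c y)) with hr
  set W : ℝ → ℝ := fun y => e y * v' y with hW
  set G : ℝ → ℝ := fun y => e y * (v'' y - mr * T y * v' y) with hG
  set GD : ℝ → ℝ := fun y => e y * (mr * -(T y)) * (v'' y - mr * T y * v' y)
      + e y * (v''' y - (mr * (K + T y^2) * v' y + mr * T y * v'' y)) with hGD
  set Z : ℝ → ℝ := fun y => r y * ((u y * F y) * W y - G y * u y) with hZ
  set ZD : ℝ → ℝ := fun y => r y * (mr * T y) * ((u y * F y) * W y - G y * u y)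
      + r y * ((((u y * F y) * F y + u y * FD y) * W y + (u y * F y) * G y)
          - (GD y * u y + G y * (u y * F y))) with hZD
  -- derivatives of the main functions
  have hud : ∀ x ∈ I, HasDerivWithinAt u (u x * F x) I x := by
    intro x hx
    have h := (((hlogc x hx).const_mul a).add ((hlogC x hx).const_mul b)).exp
    simp only [Pi.add_apply] at h
    simp only [hu, hF]
    convert h using 1 <;> first | rfl | ring
  have hFd : ∀ x ∈ I, HasDerivWithinAt F (FD x) I x := by
    intro x hx
    have h := (((hTd x hx).const_mul a).neg).sub
      ((((hTanDer x hx).hasDerivWithinAt (s := I)).const_mul k').const_mul b)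
    simp only [hF, hFD]
    convert h using 1 <;> first | rfl | ring
  have hed : ∀ x ∈ I, HasDerivWithinAt e (e x * (mr * -(T x))) I x := by
    intro x hx
    have h := ((hlogc x hx).const_mul mr).exp
    simp only [he]
    convert h using 1 <;> first | rfl | ring
  have hrd : ∀ x ∈ I, HasDerivWithinAt r (r x * (mr * T x)) I x := by
    intro x hx
    have h := ((hlogc x hx).const_mul (-mr)).exp
    simp only [hr]
    convert h using 1 <;> first | rfl | ring
  have hWd : ∀ x ∈ I, HasDerivWithinAt W (G x) I x := by
    intro x hx
    have h := (hed x hx).mul (hv' x hx)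
    simp only [hW, hG]
    convert h using 1 <;> first | rfl | ring
  have hGd : ∀ x ∈ I, HasDerivWithinAt G (GD x) I x := by
    intro x hx
    have hinner := (hv'' x hx).sub (((hTd x hx).const_mul mr).mul (hv' x hx))
    have h := (hed x hx).mul hinner
    simp only [hG, hGD]
    convert h using 1 <;> first | rfl | ring
  have hZd : ∀ x ∈ I, HasDerivWithinAt Z (ZD x) I x := by
    intro x hx
    have hUD := (hud x hx).mul (hFd x hx)
    have h := (hrd x hx).mul ((hUD.mul (hWd x hx)).sub ((hGd x hx).mul (hud x hx)))
    simp only [hZ, hZD]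
    convert h using 1 <;> first | rfl | ring
  -- Z' is negative in the interior
  have hZneg : ∀ x ∈ Ioo (-(d/2)) (d/2), ZD x < 0 := by
    intro x hx
    have hxI : x ∈ I := by rw [hIdef]; exact Ioo_subset_Icc_self hx
    have hnhds : I ∈ nhds x := by rw [hIdef]; exact Icc_mem_nhds hx.1 hx.2
    have hTat := (hTd x hxI).hasDerivAt hnhds
    have hv'at := (hv' x hxI).hasDerivAt hnhds
    have hvat := (hv x hxI).hasDerivAt hnhds
    have hv''at := (hv'' x hxI).hasDerivAt hnhds
    have hphi : HasDerivAt (fun y => mr * T y * v' y - lam * v y)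
        (mr * (K + T x^2) * v' x + mr * T x * v'' x - lam * v' x) x := by
      have h1 := ((hTat.const_mul mr).mul hv'at).sub (hvat.const_mul lam)
      convert h1 using 1 <;> first | rfl | ring
    have heqn : v'' =ᶠ[nhds x] (fun y => mr * T y * v' y - lam * v y) := by
      filter_upwards [Ioo_mem_nhds hx.1 hx.2] with y hy
      have h2 := heq y hy; linarith
    have h3 : v''' x = mr * (K + T x^2) * v' x + mr * T x * v'' x - lam * v' x :=
      hv''at.unique (hphi.congr_of_eventuallyEq heqn)
    have heq' : v'' x = mr * T x * v' x - lam * v x := by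
      have h2 := heq x hx; linarith
    have hZDeq : ZD x = r x * (u x * W x) * ((F x^2 + FD x + mr * T x * F x) + lam) := by
      simp only [hZD, hG, hGD, hW]
      rw [h3, heq']
      ring
    have hident : F x^2 + FD x + mr * T x * F x + (4*s*(1-s)*k'^2 + a*K)
        = (a*(a - (mr+1))*(T x)^2 + b*(2*a - mr)*(T x)*(k' * Real.tan (k'*x))
            + b*(b-1)*(k' * Real.tan (k'*x))^2) + (4*s*(1-s) - b)*k'^2 := by
      simp only [hF, hFD]; ring
    have hq := hquad (T x) (k' * Real.tan (k' * x))
    have hconst : (4*s*(1-s) - b)*k'^2 ≤ 0 :=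
      mul_nonpos_of_nonpos_of_nonneg (by linarith) (sq_nonneg k')
    have hFx : F x^2 + FD x + mr * T x * F x + lam < 0 := by
      linarith [hident, hq, hconst, hlamk]
    have hWpos : 0 < W x := by
      simp only [hW, he]
      exact mul_pos (Real.exp_pos _) (hmono x hx)
    have hrupos : 0 < r x * (u x * W x) := by
      apply mul_pos
      · simp only [hr]; exact Real.exp_pos _
      · refine mul_pos ?_ hWpos
        simp only [hu]; exact Real.exp_pos _
    rw [hZDeq]
    exact mul_neg_of_pos_of_neg hrupos hFx
  -- Z is strictly decreasing on I
  have hZcont : ContinuousOn Z I := fun x hx => (hZd x hx).continuousWithinAt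
  have hanti : StrictAntiOn Z (Icc (-(d/2)) (d/2)) := by
    apply strictAntiOn_of_deriv_neg (convex_Icc _ _)
    · rw [← hIdef]; exact hZcont
    · intro x hx
      rw [interior_Icc] at hx
      have hxI : x ∈ I := by rw [hIdef]; exact Ioo_subset_Icc_self hx
      have hDA := (hZd x hxI).hasDerivAt (by rw [hIdef]; exact Icc_mem_nhds hx.1 hx.2)
      rw [hDA.deriv]
      exact hZneg x hx
  -- endpoint signs
  have hv'nn : ∀ x ∈ Icc (-(d/2)) (d/2), 0 ≤ v' x := by
    intro x hx
    rcases eq_or_lt_of_le hx.1 with h | h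
    · rw [← h, hNeu0]
    · rcases eq_or_lt_of_le hx.2 with h2 | h2
      · rw [h2, hNeu1]
      · exact (hmono x ⟨h, h2⟩).le
  have hmemL : -(d/2) ∈ I := by rw [hIdef]; exact left_mem_Icc.mpr hd2.le
  have hmemR : (d/2) ∈ I := by rw [hIdef]; exact right_mem_Icc.mpr hd2.le
  have hv''R : v'' (d/2) ≤ 0 := endpoint_deriv_nonpos hd2 (hv' _ hmemR) hNeu1 hv'nn
  have hv''L : 0 ≤ v'' (-(d/2)) := endpoint_deriv_nonneg hd2 (hv' _ hmemL) hNeu0 hv'nn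
  have hZR : Z (d/2) = -(r (d/2) * (u (d/2) * (e (d/2) * v'' (d/2)))) := by
    simp only [hZ, hW, hG, hNeu1]
    ring
  have hZL : Z (-(d/2)) = -(r (-(d/2)) * (u (-(d/2)) * (e (-(d/2)) * v'' (-(d/2))))) := by
    simp only [hZ, hW, hG, hNeu0]
    ring
  have hrpos : ∀ y : ℝ, 0 < r y := fun y => by simp only [hr]; exact Real.exp_pos _
  have hupos : ∀ y : ℝ, 0 < u y := fun y => by simp only [hu]; exact Real.exp_pos _
  have hepos : ∀ y : ℝ, 0 < e y := fun y => by simp only [he]; exact Real.exp_pos _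
  have hR0 : 0 ≤ Z (d/2) := by
    rw [hZR]
    have h1 : r (d/2) * (u (d/2) * (e (d/2) * v'' (d/2))) ≤ 0 := by
      apply mul_nonpos_of_nonneg_of_nonpos (hrpos _).le
      apply mul_nonpos_of_nonneg_of_nonpos (hupos _).le
      exact mul_nonpos_of_nonneg_of_nonpos (hepos _).le hv''R
    linarith
  have hL0 : Z (-(d/2)) ≤ 0 := by
    rw [hZL]
    have h1 : 0 ≤ r (-(d/2)) * (u (-(d/2)) * (e (-(d/2)) * v'' (-(d/2)))) := by
      apply mul_nonneg (hrpos _).le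
      apply mul_nonneg (hupos _).le
      exact mul_nonneg (hepos _).le hv''L
    linarith
  have hfinal : Z (d/2) < Z (-(d/2)) :=
    hanti (left_mem_Icc.mpr hd2.le) (right_mem_Icc.mpr hd2.le) hd2
  linarith
/-- One-dimensional model statement underlying Corollary 4.3: a monotone Neumann
eigenfunction `v` of `L_{(n-1)K,n} v = v'' - (n-1) T_K v' = -λ v` on `(-d/2, d/2)`
forces `λ ≥ 4 s (1-s) π²/d² + s (n-1) K` for every `s ∈ (0,1)`. -/
theorem stmt_4 (n : ℕ) (hn : 2 ≤ n) (K lam d : ℝ) (hd : 0 < d)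
    (hdK : 0 < K → d < Real.pi / Real.sqrt K)
    (v v' v'' v''' : ℝ → ℝ)
    (hv : ∀ x ∈ Icc (-(d / 2)) (d / 2),
      HasDerivWithinAt v (v' x) (Icc (-(d / 2)) (d / 2)) x)
    (hv' : ∀ x ∈ Icc (-(d / 2)) (d / 2),
      HasDerivWithinAt v' (v'' x) (Icc (-(d / 2)) (d / 2)) x)
    (hv'' : ∀ x ∈ Icc (-(d / 2)) (d / 2),
      HasDerivWithinAt v'' (v''' x) (Icc (-(d / 2)) (d / 2)) x)
    (hv'''cont : ContinuousOn v''' (Icc (-(d / 2)) (d / 2)))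
    (hNeu0 : v' (-(d / 2)) = 0) (hNeu1 : v' (d / 2) = 0)
    (hmono : ∀ x ∈ Ioo (-(d / 2)) (d / 2), 0 < v' x)
    (heq : ∀ x ∈ Ioo (-(d / 2)) (d / 2),
      v'' x - ((n : ℝ) - 1) * modelT K x * v' x = -lam * v x) :
    ∀ s ∈ Ioo (0 : ℝ) 1,
      lam ≥ 4 * s * (1 - s) * Real.pi ^ 2 / d ^ 2 + s * ((n : ℝ) - 1) * K := by
  intro s hs
  obtain ⟨hs0, hs1⟩ := hs
  rw [ge_iff_le]
  by_contra hcon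
  rw [not_le] at hcon
  have hn1 : 1 ≤ n - 1 := by omega
  have hcast : ((n - 1 : ℕ) : ℝ) = (n : ℝ) - 1 := by
    have h := Nat.cast_sub (show 1 ≤ n by omega) (R := ℝ)
    simpa using h
  have heq' : ∀ x ∈ Ioo (-(d / 2)) (d / 2),
      v'' x - ((n - 1 : ℕ) : ℝ) * modelT K x * v' x = -lam * v x := by
    intro x hx; rw [hcast]; exact heq x hx
  have hcon' : lam < 4 * s * (1 - s) * Real.pi ^ 2 / d ^ 2 + s * ((n - 1 : ℕ) : ℝ) * K := by
    rw [hcast]; exact hcon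
  rcases lt_trichotomy K 0 with hK | hK | hK
  · -- K < 0 : hyperbolic model
    set sk := Real.sqrt (-K) with hsk
    have hskpos : 0 < sk := Real.sqrt_pos.mpr (by linarith)
    have hsk2 : sk * sk = -K := Real.mul_self_sqrt (by linarith)
    have hTval : ∀ x : ℝ, modelT K x = -sk * Real.tanh (sk * x) := by
      intro x; rw [modelT, if_neg (by linarith), if_neg (by linarith)]
    have hmul : ∀ x : ℝ, HasDerivAt (fun y : ℝ => sk * y) sk x := fun x => by
      simpa using (hasDerivAt_id x).const_mul sk
    have h1 : ∀ x ∈ Icc (-(d / 2)) (d / 2), (0:ℝ) < Real.cosh (sk * x) :=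
      fun x _ => Real.cosh_pos _
    have h2 : ∀ x ∈ Icc (-(d / 2)) (d / 2),
        HasDerivWithinAt (fun y => Real.cosh (sk * y))
          (-(modelT K x * Real.cosh (sk * x))) (Icc (-(d / 2)) (d / 2)) x := by
      intro x hx
      have h := ((Real.hasDerivAt_cosh (sk*x)).comp x (hmul x)).hasDerivWithinAt
        (s := Icc (-(d / 2)) (d / 2))
      convert h using 1
      · rfl
      · rfl
      · rfl
      rw [hTval, Real.tanh_eq_sinh_div_cosh]
      field_simp
    have h3 : ∀ x ∈ Icc (-(d / 2)) (d / 2),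
        HasDerivWithinAt (modelT K) (K + modelT K x ^ 2) (Icc (-(d / 2)) (d / 2)) x := by
      intro x hx
      have hch : Real.cosh (sk*x) ≠ 0 := (Real.cosh_pos _).ne'
      have hfun : modelT K = fun y => -sk * (Real.sinh (sk*y) / Real.cosh (sk*y)) := by
        funext y; rw [hTval, Real.tanh_eq_sinh_div_cosh]
      have hdiv := ((((Real.hasDerivAt_sinh (sk*x)).comp x (hmul x)).div
        ((Real.hasDerivAt_cosh (sk*x)).comp x (hmul x)) hch).const_mul (-sk)).hasDerivWithinAt
        (s := Icc (-(d / 2)) (d / 2))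
      simp only [hfun]
      convert hdiv using 1
      · rfl
      · rfl
      · rfl
      simp only [Function.comp_apply]
      have hC := Real.cosh_sq_sub_sinh_sq (sk*x)
      field_simp
      nlinarith [hC, hsk2, sq_nonneg (Real.cosh (sk*x)), sq_nonneg (Real.sinh (sk*x))]
    exact model_key (n-1) hn1 K lam d hd (fun y => Real.cosh (sk * y)) (modelT K)
      h1 h2 h3 v v' v'' v''' hv hv' hv'' hNeu0 hNeu1 hmono heq' s hs0 hs1 hcon'
  · -- K = 0 : flat model
    subst hK
    have hT0 : modelT 0 = fun _ : ℝ => (0:ℝ) := by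
      funext x; rw [modelT, if_neg (lt_irrefl 0), if_pos rfl]
    have h1 : ∀ x ∈ Icc (-(d / 2)) (d / 2), (0:ℝ) < (1:ℝ) := fun x _ => one_pos
    have h2 : ∀ x ∈ Icc (-(d / 2)) (d / 2),
        HasDerivWithinAt (fun _ : ℝ => (1:ℝ))
          (-(modelT 0 x * 1)) (Icc (-(d / 2)) (d / 2)) x := by
      intro x hx
      have h := hasDerivWithinAt_const x (Icc (-(d / 2)) (d / 2)) (1:ℝ)
      convert h using 1
      · rfl
      · rfl
      rw [hT0]; simp
    have h3 : ∀ x ∈ Icc (-(d / 2)) (d / 2),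
        HasDerivWithinAt (modelT 0) (0 + modelT 0 x ^ 2) (Icc (-(d / 2)) (d / 2)) x := by
      intro x hx
      rw [hT0]
      have h := hasDerivWithinAt_const x (Icc (-(d / 2)) (d / 2)) (0:ℝ)
      convert h using 1
      · rfl
      · rfl
      simp
    exact model_key (n-1) hn1 0 lam d hd (fun _ => (1:ℝ)) (modelT 0)
      h1 h2 h3 v v' v'' v''' hv hv' hv'' hNeu0 hNeu1 hmono heq' s hs0 hs1 hcon'
  · -- K > 0 : spherical model
    set sk := Real.sqrt K with hsk
    have hskpos : 0 < sk := Real.sqrt_pos.mpr hK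
    have hsk2 : sk * sk = K := Real.mul_self_sqrt hK.le
    have hTval : ∀ x : ℝ, modelT K x = sk * Real.tan (sk * x) := by
      intro x; rw [modelT, if_pos hK]
    have hmul : ∀ x : ℝ, HasDerivAt (fun y : ℝ => sk * y) sk x := fun x => by
      simpa using (hasDerivAt_id x).const_mul sk
    have hdlt : d * sk < π := by
      have h := hdK hK
      rw [lt_div_iff₀ hskpos] at h
      exact h
    have hcos : ∀ x ∈ Icc (-(d / 2)) (d / 2), (0:ℝ) < Real.cos (sk * x) := by
      intro x hx
      rw [mem_Icc] at hx
      apply Real.cos_pos_of_mem_Ioo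
      constructor
      · nlinarith [hx.1]
      · nlinarith [hx.2]
    have h2 : ∀ x ∈ Icc (-(d / 2)) (d / 2),
        HasDerivWithinAt (fun y => Real.cos (sk * y))
          (-(modelT K x * Real.cos (sk * x))) (Icc (-(d / 2)) (d / 2)) x := by
      intro x hx
      have h := ((Real.hasDerivAt_cos (sk*x)).comp x (hmul x)).hasDerivWithinAt
        (s := Icc (-(d / 2)) (d / 2))
      convert h using 1
      · rfl
      · rfl
      · rfl
      rw [hTval, Real.tan_eq_sin_div_cos]
      field_simp [(hcos x hx).ne']
    have h3 : ∀ x ∈ Icc (-(d / 2)) (d / 2),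
        HasDerivWithinAt (modelT K) (K + modelT K x ^ 2) (Icc (-(d / 2)) (d / 2)) x := by
      intro x hx
      have hcne : Real.cos (sk*x) ≠ 0 := (hcos x hx).ne'
      have hfun : modelT K = fun y => sk * Real.tan (sk * y) := funext hTval
      have hder := (((Real.hasDerivAt_tan hcne).comp x (hmul x)).const_mul sk).hasDerivWithinAt
        (s := Icc (-(d / 2)) (d / 2))
      simp only [hfun]
      convert hder using 1
      · rfl
      · rfl
      · rfl
      have htansq : 1 / Real.cos (sk*x)^2 = 1 + Real.tan (sk*x)^2 := by
        rw [← Real.inv_one_add_tan_sq hcne, one_div, inv_inv]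
      rw [htansq]
      linear_combination -hsk2
    exact model_key (n-1) hn1 K lam d hd (fun y => Real.cos (sk * y)) (modelT K)
      hcos h2 h3 v v' v'' v''' hv hv' hv'' hNeu0 hNeu1 hmono heq' s hs0 hs1 hcon'
end

section
/- Let l > 1, λ ∈ ℝ, and a < b be real numbers. Let ρ : ℝ → ℝ be continuous on [a, b), differentiable and strictly positive on (a, b), and satisfy lim_{s → a⁺} (s - a)·ρ'(s)/ρ(s) = l - 1. Let v : ℝ → ℝ be continuous on [a, b) with v(a) = -1, differentiable on (a, b), and suppose that for every s ∈ (a, b), ρ(s)·v'(s) = -λ·∫_a^s ρ(t)·v(t) dt. Then lim_{s → a⁺} v'(s)/(s - a) = λ/l. -/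
open Set Real MeasureTheory Filter

/-- L'Hôpital-type limit from the proof of Theorem 3.3: if `ρ v' (s) = -λ ∫_a^s ρ v`
with `v(a) = -1`, `ρ > 0` on `(a,b)` and `(s-a)ρ'(s)/ρ(s) → l-1` as `s → a⁺`,
then `v'(s)/(s-a) → λ/l` as `s → a⁺`. -/
theorem stmt_6 (l lam a b : ℝ) (hl : 1 < l) (hab : a < b)
    (ρ ρ' v v' : ℝ → ℝ)
    (hρcont : ContinuousOn ρ (Ico a b))
    (hρ : ∀ s ∈ Ioo a b, HasDerivAt ρ (ρ' s) s)
    (hρpos : ∀ s ∈ Ioo a b, 0 < ρ s)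
    (hρlim : Filter.Tendsto (fun s => (s - a) * ρ' s / ρ s)
      (nhdsWithin a (Ioi a)) (nhds (l - 1)))
    (hvcont : ContinuousOn v (Ico a b))
    (hva : v a = -1)
    (hv : ∀ s ∈ Ioo a b, HasDerivAt v (v' s) s)
    (heq : ∀ s ∈ Ioo a b, ρ s * v' s = -lam * ∫ t in a..s, ρ t * v t) :
    Filter.Tendsto (fun s => v' s / (s - a)) (nhdsWithin a (Ioi a))
      (nhds (lam / l)) := by
  have hIoo_mem : Ioo a b ∈ nhdsWithin a (Ioi a) :=
    Ioo_mem_nhdsGT_of_mem ⟨le_refl a, hab⟩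
  have hρv_cont : ContinuousOn (fun t => ρ t * v t) (Ico a b) := hρcont.mul hvcont
  -- limit of v along 𝓝[>] a
  have hv_tend : Tendsto v (nhdsWithin a (Ioi a)) (nhds (-1)) := by
    rw [← nhdsWithin_Ioo_eq_nhdsGT hab, ← hva]
    exact ((hvcont a ⟨le_refl a, hab⟩).mono Ioo_subset_Ico_self).tendsto
  have hρ_tend : Tendsto ρ (nhdsWithin a (Ioi a)) (nhds (ρ a)) := by
    rw [← nhdsWithin_Ioo_eq_nhdsGT hab]
    exact ((hρcont a ⟨le_refl a, hab⟩).mono Ioo_subset_Ico_self).tendsto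
  set G : ℝ → ℝ := fun s => ∫ t in a..s, ρ t * v t with hGdef
  set f : ℝ → ℝ := fun s => -lam * G s with hfdef
  set g : ℝ → ℝ := fun s => ρ s * (s - a) with hgdef
  set f' : ℝ → ℝ := fun s => -lam * (ρ s * v s) with hf'def
  set g' : ℝ → ℝ := fun s => ρ' s * (s - a) + ρ s * 1 with hg'def
  have hint : ∀ s ∈ Ioo a b, IntervalIntegrable (fun t => ρ t * v t) volume a s := by
    intro s hs
    exact (hρv_cont.mono (fun t ht => ⟨ht.1, lt_of_le_of_lt ht.2 hs.2⟩)
      : ContinuousOn _ (Icc a s)).intervalIntegrable_of_Icc hs.1.le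
  have hG : ∀ s ∈ Ioo a b, HasDerivAt G (ρ s * v s) s := by
    intro s hs
    refine intervalIntegral.integral_hasDerivAt_right (hint s hs) ?_ ?_
    · exact (hρv_cont.mono Ioo_subset_Ico_self).stronglyMeasurableAtFilter isOpen_Ioo s hs
    · exact (hρv_cont.mono Ioo_subset_Ico_self).continuousAt (Ioo_mem_nhds hs.1 hs.2)
  have hff' : ∀ s ∈ Ioo a b, HasDerivAt f (f' s) s := fun s hs => (hG s hs).const_mul (-lam)
  have hgg' : ∀ s ∈ Ioo a b, HasDerivAt g (g' s) s := fun s hs =>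
    (hρ s hs).mul ((hasDerivAt_id s).sub_const a)
  -- choose c such that on Ioo a c the denominator derivative is nonzero
  have h1 : ∀ᶠ s in nhdsWithin a (Ioi a), 0 < (s - a) * ρ' s / ρ s :=
    hρlim.eventually (eventually_gt_nhds (by linarith))
  have h2 : {s | 0 < (s - a) * ρ' s / ρ s} ∩ Ioo a b ∈ nhdsWithin a (Ioi a) :=
    inter_mem h1 hIoo_mem
  obtain ⟨c, hc, hsub⟩ := mem_nhdsGT_iff_exists_Ioo_subset.mp h2
  have hg'pos : ∀ s ∈ Ioo a c, 0 < g' s := by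
    intro s hs
    obtain ⟨hpos, hsb⟩ := hsub hs
    have hρs := hρpos s hsb
    have : 0 < (s - a) * ρ' s := by
      have := mul_pos hpos hρs
      rwa [div_mul_cancel₀ _ (ne_of_gt hρs)] at this
    simp only [hg'def]
    nlinarith
  -- limits of f and g at a⁺
  have hGa : Tendsto G (nhdsWithin a (Ioi a)) (nhds 0) := by
    set m := (a + b) / 2 with hm
    have ham : a < m := by simp [hm]; linarith
    have hmb : m < b := by simp [hm]; linarith
    have hIccm : Icc a m ⊆ Ico a b := fun t ht => ⟨ht.1, lt_of_le_of_lt ht.2 hmb⟩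
    have hintm : IntegrableOn (fun t => ρ t * v t) (uIcc a m) volume := by
      rw [uIcc_of_le ham.le]
      exact ((hρv_cont.mono hIccm).integrableOn_compact isCompact_Icc)
    have hGc : ContinuousOn G (uIcc a m) :=
      intervalIntegral.continuousOn_primitive_interval hintm
    have ha_mem : a ∈ uIcc a m := left_mem_uIcc
    have := (hGc a ha_mem).tendsto
    have hG0 : G a = 0 := intervalIntegral.integral_same
    rw [hG0] at this
    refine this.comp ?_ |>.congr (fun _ => rfl)
    rw [← nhdsWithin_Ioo_eq_nhdsGT ham]
    exact tendsto_nhdsWithin_mono_left (by rw [uIcc_of_le ham.le]; exact Ioo_subset_Icc_self)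
      (Filter.tendsto_id)
  have hfa : Tendsto f (nhdsWithin a (Ioi a)) (nhds 0) := by
    simpa [hfdef, hGdef, neg_mul] using hGa.const_mul (-lam)
  have hga : Tendsto g (nhdsWithin a (Ioi a)) (nhds 0) := by
    have hsa : Tendsto (fun s => s - a) (nhdsWithin a (Ioi a)) (nhds 0) := by
      have : Tendsto (fun s : ℝ => s - a) (nhds a) (nhds (a - a)) :=
        (continuous_id.sub continuous_const).tendsto a
      simpa using this.mono_left nhdsWithin_le_nhds
    simpa using hρ_tend.mul hsa
  -- limit of f'/g'
  have hdiv : Tendsto (fun s => f' s / g' s) (nhdsWithin a (Ioi a)) (nhds (lam / l)) := by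
    have key : Tendsto (fun s => (-lam * v s) / ((s - a) * ρ' s / ρ s + 1))
        (nhdsWithin a (Ioi a)) (nhds ((-lam * (-1)) / ((l - 1) + 1))) := by
      refine Tendsto.div (Tendsto.const_mul _ hv_tend)
        (hρlim.add tendsto_const_nhds) (by linarith)
    have hval : (-lam * (-1)) / ((l - 1) + 1) = lam / l := by ring_nf
    rw [hval] at key
    refine key.congr' ?_
    filter_upwards [hIoo_mem] with s hs
    have hρs := ne_of_gt (hρpos s hs)
    have hden : (s - a) * ρ' s / ρ s + 1 = ((s - a) * ρ' s + ρ s) / ρ s := by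
      field_simp
    rw [hden, div_div_eq_mul_div]
    simp only [hf'def, hg'def]
    ring_nf
  have hlh := HasDerivAt.lhopital_zero_right_on_Ioo hc
    (fun x hx => hff' x (hsub hx).2) (fun x hx => hgg' x (hsub hx).2)
    (fun x hx => ne_of_gt (hg'pos x hx)) hfa hga hdiv
  refine hlh.congr' ?_
  filter_upwards [hIoo_mem] with s hs
  have hρs := ne_of_gt (hρpos s hs)
  have : f s = ρ s * v' s := by
    simp only [hfdef, hGdef]
    rw [heq s hs]
  rw [this, hgdef]
  exact mul_div_mul_left _ _ hρs
end

section
/- Let c ≥ 0 and T > 0, and let φ : ℝ → ℝ be differentiable on [0, T] with φ'(s) ≥ c·φ(s)² for all s ∈ [0, T]. Then for all s₁, s₂ with 0 ≤ s₁ ≤ s₂ ≤ T, one has φ(s₂) - φ(s₁) ≥ c·(s₂ - s₁)·φ(s₁)·φ(s₂). -/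
open Set

private lemma key_aux (c : ℝ) (a b : ℝ) (hab : a < b) (φ φ' : ℝ → ℝ)
    (hφ : ∀ s ∈ Icc a b, HasDerivWithinAt φ (φ' s) (Icc a b) s)
    (hineq : ∀ s ∈ Icc a b, φ' s ≥ c * (φ s) ^ 2)
    (hne : ∀ s ∈ Icc a b, φ s ≠ 0) :
    (φ a)⁻¹ - (φ b)⁻¹ ≥ c * (b - a) := by
  set g : ℝ → ℝ := fun s => -(φ s)⁻¹ - c * s with hg
  have hderiv : ∀ s ∈ Icc a b, HasDerivWithinAt g (φ' s / (φ s) ^ 2 - c) (Icc a b) s := by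
    intro s hs
    have h := ((hφ s hs).inv (hne s hs)).neg.sub ((hasDerivWithinAt_id s (Icc a b)).const_mul c)
    exact h.congr_deriv (by ring)
  have hmono : MonotoneOn g (Icc a b) := by
    apply monotoneOn_of_hasDerivWithinAt_nonneg (convex_Icc a b)
      (f' := fun s => φ' s / (φ s) ^ 2 - c)
    · intro s hs; exact (hderiv s hs).continuousWithinAt
    · intro s hs
      exact ((hderiv s (interior_subset hs)).mono interior_subset)
    · intro s hs
      have hs' : s ∈ Icc a b := interior_subset hs
      have h2 : (0:ℝ) < (φ s) ^ 2 := pow_two_pos_of_ne_zero (hne s hs')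
      have := hineq s hs'
      rw [sub_nonneg, le_div_iff₀ h2]
      linarith
  have := hmono (left_mem_Icc.mpr hab.le) (right_mem_Icc.mpr hab.le) hab.le
  simp only [hg] at this
  linarith

/-- Differential-inequality comparison lemma (inequality (5.7) in the proof of
Theorem 1.4): if `φ' ≥ c φ²` on `[0, T]` then
`φ(s₂) - φ(s₁) ≥ c (s₂ - s₁) φ(s₁) φ(s₂)` for `0 ≤ s₁ ≤ s₂ ≤ T`. -/
theorem stmt_7 (c T : ℝ) (hc : 0 ≤ c) (hT : 0 < T) (φ φ' : ℝ → ℝ)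
    (hφ : ∀ s ∈ Icc (0 : ℝ) T, HasDerivWithinAt φ (φ' s) (Icc (0 : ℝ) T) s)
    (hineq : ∀ s ∈ Icc (0 : ℝ) T, φ' s ≥ c * (φ s) ^ 2) :
    ∀ s₁ s₂ : ℝ, 0 ≤ s₁ → s₁ ≤ s₂ → s₂ ≤ T →
      φ s₂ - φ s₁ ≥ c * (s₂ - s₁) * φ s₁ * φ s₂ := by
  intro s₁ s₂ h0 h12 h2T
  rcases eq_or_lt_of_le h12 with rfl | hlt
  · simp
  have hmem1 : s₁ ∈ Icc (0:ℝ) T := ⟨h0, h12.trans h2T⟩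
  have hmem2 : s₂ ∈ Icc (0:ℝ) T := ⟨h0.trans h12, h2T⟩
  have hsub : Icc s₁ s₂ ⊆ Icc (0:ℝ) T := Icc_subset_Icc h0 h2T
  -- φ is monotone on [0,T]
  have hmonoφ : MonotoneOn φ (Icc (0:ℝ) T) := by
    apply monotoneOn_of_hasDerivWithinAt_nonneg (convex_Icc 0 T) (f' := φ')
    · intro s hs; exact (hφ s hs).continuousWithinAt
    · intro s hs
      exact ((hφ s (interior_subset hs)).mono interior_subset)
    · intro s hs
      have := hineq s (interior_subset hs)
      nlinarith [sq_nonneg (φ s)]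
  have hφ2 : ∀ s ∈ Icc s₁ s₂, HasDerivWithinAt φ (φ' s) (Icc s₁ s₂) s :=
    fun s hs => (hφ s (hsub hs)).mono hsub
  have hineq2 : ∀ s ∈ Icc s₁ s₂, φ' s ≥ c * (φ s) ^ 2 := fun s hs => hineq s (hsub hs)
  by_cases hb : φ s₂ < 0
  · -- φ negative on [s₁,s₂]
    have hne : ∀ s ∈ Icc s₁ s₂, φ s ≠ 0 := fun s hs =>
      (lt_of_le_of_lt (hmonoφ (hsub hs) hmem2 hs.2) hb).ne
    have key := key_aux c s₁ s₂ hlt φ φ' hφ2 hineq2 hne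
    have ha : φ s₁ < 0 := lt_of_le_of_lt (hmonoφ hmem1 hmem2 h12) hb
    have hab : 0 < φ s₁ * φ s₂ := mul_pos_of_neg_of_neg ha hb
    have h1 : (φ s₁)⁻¹ * (φ s₁ * φ s₂) = φ s₂ := by
      rw [← mul_assoc, inv_mul_cancel₀ ha.ne, one_mul]
    have h2 : (φ s₂)⁻¹ * (φ s₁ * φ s₂) = φ s₁ := by
      rw [mul_comm (φ s₁), ← mul_assoc, inv_mul_cancel₀ hb.ne, one_mul]
    nlinarith [mul_le_mul_of_nonneg_right key hab.le]
  · by_cases ha : 0 < φ s₁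
    · have hne : ∀ s ∈ Icc s₁ s₂, φ s ≠ 0 := fun s hs =>
        (lt_of_lt_of_le ha (hmonoφ hmem1 (hsub hs) hs.1)).ne'
      have key := key_aux c s₁ s₂ hlt φ φ' hφ2 hineq2 hne
      have hb' : 0 < φ s₂ := lt_of_lt_of_le ha (hmonoφ hmem1 hmem2 h12)
      have hab : 0 < φ s₁ * φ s₂ := mul_pos ha hb'
      have h1 : (φ s₁)⁻¹ * (φ s₁ * φ s₂) = φ s₂ := by
        rw [← mul_assoc, inv_mul_cancel₀ ha.ne', one_mul]
      have h2 : (φ s₂)⁻¹ * (φ s₁ * φ s₂) = φ s₁ := by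
        rw [mul_comm (φ s₁), ← mul_assoc, inv_mul_cancel₀ hb'.ne', one_mul]
      nlinarith [mul_le_mul_of_nonneg_right key hab.le]
    · push_neg at ha hb
      have hLHS : 0 ≤ φ s₂ - φ s₁ := sub_nonneg.mpr (hmonoφ hmem1 hmem2 h12)
      have hRHS : c * (s₂ - s₁) * φ s₁ * φ s₂ ≤ 0 := by
        have : φ s₁ * φ s₂ ≤ 0 := mul_nonpos_of_nonpos_of_nonneg ha hb
        have hcs : 0 ≤ c * (s₂ - s₁) := mul_nonneg hc (by linarith)
        calc c * (s₂ - s₁) * φ s₁ * φ s₂ = c * (s₂ - s₁) * (φ s₁ * φ s₂) := by ring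
          _ ≤ 0 := mul_nonpos_of_nonneg_of_nonpos hcs this
      linarith
end

section
/- Let n be a positive integer and let w : (EuclideanSpace ℝ (Fin n)) × ℝ → ℝ be continuously differentiable on ℝⁿ × (0, ∞), and suppose that for all x ∈ ℝⁿ and all t > 0, ‖∇_x w(x,t)‖² - ∂_t w(x,t) ≤ n/(2t), where ∇_x w(x,t) denotes the gradient of w(·,t) at x. Then for all x₁, x₂ ∈ ℝⁿ and all 0 < t₁ < t₂, one has w(x₁, t₁) ≤ w(x₂, t₂) + (n/2)·log(t₂/t₁) + ‖x₁ - x₂‖²/(4(t₂ - t₁)). -/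
open Set Real

/-- Path-integration step deducing the parabolic Harnack inequality
(Corollary 5.4) from the Li–Yau gradient estimate (Theorem 1.4), stated on
Euclidean space: if `w` (playing the role of `log u`) satisfies
`‖∇_x w‖² - ∂_t w ≤ n/(2t)` for all `t > 0`, then
`w(x₁,t₁) ≤ w(x₂,t₂) + (n/2) log(t₂/t₁) + ‖x₁-x₂‖²/(4(t₂-t₁))`. -/
theorem stmt_9 (n : ℕ) (hn : 0 < n)
    (w : EuclideanSpace ℝ (Fin n) × ℝ → ℝ)
    (hw : ContDiffOn ℝ 1 w ((Set.univ : Set (EuclideanSpace ℝ (Fin n))) ×ˢ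
      Set.Ioi (0 : ℝ)))
    (hLY : ∀ (x : EuclideanSpace ℝ (Fin n)) (t : ℝ), 0 < t →
      ‖gradient (fun y => w (y, t)) x‖ ^ 2 - deriv (fun τ => w (x, τ)) t ≤
        (n : ℝ) / (2 * t)) :
    ∀ (x₁ x₂ : EuclideanSpace ℝ (Fin n)) (t₁ t₂ : ℝ), 0 < t₁ → t₁ < t₂ →
      w (x₁, t₁) ≤ w (x₂, t₂) + ((n : ℝ) / 2) * Real.log (t₂ / t₁) +
        ‖x₁ - x₂‖ ^ 2 / (4 * (t₂ - t₁)) := by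
  intro x₁ x₂ t₁ t₂ ht₁ h12
  have hT : (0:ℝ) < t₂ - t₁ := sub_pos.mpr h12
  set v : EuclideanSpace ℝ (Fin n) := x₁ - x₂ with hv
  set T : ℝ := t₂ - t₁ with hTdef
  set m : EuclideanSpace ℝ (Fin n) := -(T⁻¹ • v) with hm
  set γ : ℝ → EuclideanSpace ℝ (Fin n) := fun t => x₂ + (T⁻¹ * (t₂ - t)) • v
    with hγ
  set c : ℝ := ‖v‖^2 / (4 * T^2) with hc
  set g : ℝ → ℝ := fun t => w (γ t, t) + ((n:ℝ)/2) * Real.log t + c * t with hg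
  have hγderiv : ∀ t : ℝ, HasDerivAt γ m t := by
    intro t
    have h1 : HasDerivAt (fun s : ℝ => T⁻¹ * (t₂ - s)) (-T⁻¹) t := by
      simpa using ((hasDerivAt_id t).const_sub t₂).const_mul T⁻¹
    have := (h1.smul_const v).const_add x₂
    rw [hm, ← neg_smul]; exact this
  have hopen : IsOpen ((Set.univ : Set (EuclideanSpace ℝ (Fin n))) ×ˢ
      Set.Ioi (0 : ℝ)) := isOpen_univ.prod isOpen_Ioi
  have key : ∀ t : ℝ, 0 < t → ∃ d : ℝ, HasDerivAt g d t ∧ 0 ≤ d := by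
    intro t ht
    have hp : (γ t, t) ∈ (Set.univ : Set (EuclideanSpace ℝ (Fin n))) ×ˢ
        Set.Ioi (0 : ℝ) := by simp [ht]
    have hdiff : DifferentiableAt ℝ w (γ t, t) :=
      ((hw.contDiffAt (hopen.mem_nhds hp)).differentiableAt one_ne_zero)
    set D := fderiv ℝ w (γ t, t) with hD
    -- derivative of t ↦ w (γ t, t)
    have hpair : HasDerivAt (fun s : ℝ => ((γ s, s) :
        EuclideanSpace ℝ (Fin n) × ℝ)) (m, 1) t :=
      (hγderiv t).prodMk (hasDerivAt_id t)
    have hcomp0 := hdiff.hasFDerivAt.comp_hasDerivAt_of_eq t hpair rfl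
    have hcomp : HasDerivAt (fun s : ℝ => w (γ s, s)) (D (m, 1)) t := by
      exact hcomp0
    have hlog : HasDerivAt (fun s : ℝ => ((n:ℝ)/2) * Real.log s)
        (((n:ℝ)/2) * t⁻¹) t := (Real.hasDerivAt_log ht.ne').const_mul _
    have hlin : HasDerivAt (fun s : ℝ => c * s) c t := by
      simpa using (hasDerivAt_id t).const_mul c
    have hgder : HasDerivAt g (D (m, 1) + ((n:ℝ)/2) * t⁻¹ + c) t :=
      (hcomp.add hlog).add hlin
    refine ⟨_, hgder, ?_⟩
    -- split D (m,1) = D (m,0) + D (0,1)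
    have hsplit : D (m, 1) = D (m, 0) + D ((0 : EuclideanSpace ℝ (Fin n)), 1) := by
      rw [← map_add]; norm_num
    -- space part: D (m, 0) = ⟪G, m⟫
    set G : EuclideanSpace ℝ (Fin n) := gradient (fun y => w (y, t)) (γ t) with hG
    have hpartial : HasFDerivAt (fun y : EuclideanSpace ℝ (Fin n) => w (y, t))
        (D.comp (ContinuousLinearMap.inl ℝ (EuclideanSpace ℝ (Fin n)) ℝ)) (γ t) := by
      have hin : HasFDerivAt (fun y : EuclideanSpace ℝ (Fin n) => (y, t))
          (ContinuousLinearMap.inl ℝ (EuclideanSpace ℝ (Fin n)) ℝ) (γ t) :=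
        (hasFDerivAt_id (γ t)).prodMk (hasFDerivAt_const t (γ t))
      exact hdiff.hasFDerivAt.comp (γ t) hin
    have hinner : @inner ℝ (EuclideanSpace ℝ (Fin n)) _ G m = D (m, 0) := by
      have hfd : fderiv ℝ (fun y : EuclideanSpace ℝ (Fin n) => w (y, t)) (γ t)
          = D.comp (ContinuousLinearMap.inl ℝ (EuclideanSpace ℝ (Fin n)) ℝ) :=
        hpartial.fderiv
      rw [hG, gradient, hfd]
      simp [InnerProductSpace.toDual_symm_apply]
    -- time part: deriv (fun τ => w (γ t, τ)) t = D (0, 1)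
    have htime : deriv (fun τ : ℝ => w (γ t, τ)) t
        = D ((0 : EuclideanSpace ℝ (Fin n)), 1) := by
      have hpair2 : HasDerivAt (fun τ : ℝ => ((γ t, τ) :
          EuclideanSpace ℝ (Fin n) × ℝ)) ((0 : EuclideanSpace ℝ (Fin n)), 1) t :=
        (hasDerivAt_const t (γ t)).prodMk (hasDerivAt_id t)
      have := hdiff.hasFDerivAt.comp_hasDerivAt_of_eq t hpair2 rfl
      exact HasDerivAt.deriv (by exact this)
    have hLY' := hLY (γ t) t ht
    rw [htime, ← hG] at hLY'
    -- Cauchy-Schwarz + AM-GM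
    have hCS : -(‖G‖ * ‖m‖) ≤ @inner ℝ (EuclideanSpace ℝ (Fin n)) _ G m := by
      have := abs_real_inner_le_norm G m
      linarith [abs_le.mp this]
    have hmnorm : ‖m‖ = T⁻¹ * ‖v‖ := by
      rw [hm, norm_neg, norm_smul, Real.norm_eq_abs, abs_of_pos (inv_pos.mpr hT)]
    have hcm : c = ‖m‖^2 / 4 := by
      rw [hc, hmnorm, mul_pow, inv_pow, div_eq_mul_inv, div_eq_mul_inv, mul_inv]
      ring
    have hAMGM : ‖G‖ * ‖m‖ ≤ ‖G‖^2 + ‖m‖^2/4 := by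
      nlinarith [sq_nonneg (‖G‖ - ‖m‖/2)]
    have hfrac : (n:ℝ) / (2 * t) = ((n:ℝ)/2) * t⁻¹ := by
      field_simp
    rw [hsplit, ← hinner, hcm, ← hfrac]
    linarith [hCS, hAMGM, hLY']
  -- monotonicity of g on [t₁, t₂]
  have hcont : ContinuousOn g (Set.Icc t₁ t₂) := by
    intro t ht
    exact ((key t (lt_of_lt_of_le ht₁ ht.1)).choose_spec.1).continuousAt.continuousWithinAt
  have hdiffInt : DifferentiableOn ℝ g (interior (Set.Icc t₁ t₂)) := by
    intro t ht
    rw [interior_Icc] at ht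
    exact ((key t (ht₁.trans ht.1)).choose_spec.1).differentiableAt.differentiableWithinAt
  have hderivnn : ∀ t ∈ interior (Set.Icc t₁ t₂), 0 ≤ deriv g t := by
    intro t ht
    rw [interior_Icc] at ht
    obtain ⟨d, hd, hd0⟩ := key t (ht₁.trans ht.1)
    rw [hd.deriv]; exact hd0
  have hmono : MonotoneOn g (Set.Icc t₁ t₂) :=
    monotoneOn_of_deriv_nonneg (convex_Icc t₁ t₂) hcont hdiffInt hderivnn
  have hle : g t₁ ≤ g t₂ :=
    hmono (Set.left_mem_Icc.mpr h12.le) (Set.right_mem_Icc.mpr h12.le) h12.le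
  have hγ1 : γ t₁ = x₁ := by
    rw [hγ]
    simp only
    rw [← hTdef, inv_mul_cancel₀ hT.ne', hv]
    simp
  have hγ2 : γ t₂ = x₂ := by
    rw [hγ]; simp
  rw [hg] at hle
  simp only [hγ1, hγ2] at hle
  have hlogdiv : Real.log (t₂ / t₁) = Real.log t₂ - Real.log t₁ :=
    Real.log_div (ht₁.trans h12).ne' ht₁.ne'
  have hfinal : c * t₂ - c * t₁ = ‖v‖^2 / (4 * T) := by
    have h1 : c * t₂ - c * t₁ = c * T := by rw [hTdef]; ring
    rw [h1, hc]
    field_simp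
  have : ‖x₁ - x₂‖ ^ 2 / (4 * (t₂ - t₁)) = c * t₂ - c * t₁ := by
    rw [hfinal, ← hv, ← hTdef]
  rw [this, hlogdiv]
  linarith
end
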